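/- arXiv:1509.08045 — 13 statements merged into one kernel-verified Lean document; each statement's English description precedes it below -/
import Mathlib

section
/- For parameters ξ_m > 0, μ ∈ [0, ξ_m], the function f(Δ) = sqrt(ξ_m² + Δ²) − sqrt(μ² + Δ²) + μ·log((μ + sqrt(μ² + Δ²))/Δ) is strictly decreasing in Δ on (0, ∞). -/
open Real Set

lemma aux_hasDeriv (ξm μ Δ : ℝ) (hξ : 0 < ξm) (hμ0 : 0 ≤ μ) (hΔ : 0 < Δ) :
    HasDerivAt (fun x : ℝ =>
      Real.sqrt (ξm ^ 2 + x ^ 2) - Real.sqrt (μ ^ 2 + x ^ 2)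
        + μ * (Real.log (μ + Real.sqrt (μ ^ 2 + x ^ 2)) - Real.log x))
      (Δ / Real.sqrt (ξm ^ 2 + Δ ^ 2) - Δ / Real.sqrt (μ ^ 2 + Δ ^ 2)
        + μ * ((Δ / Real.sqrt (μ ^ 2 + Δ ^ 2)) / (μ + Real.sqrt (μ ^ 2 + Δ ^ 2)) - Δ⁻¹)) Δ := by
  have hA : (0:ℝ) < ξm ^ 2 + Δ ^ 2 := by positivity
  have hB : (0:ℝ) < μ ^ 2 + Δ ^ 2 := by positivity
  have hsB : 0 < Real.sqrt (μ ^ 2 + Δ ^ 2) := Real.sqrt_pos.2 hB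
  have hSA : 0 < Real.sqrt (ξm ^ 2 + Δ ^ 2) := Real.sqrt_pos.2 hA
  have hA' : HasDerivAt (fun x : ℝ => ξm ^ 2 + x ^ 2) (2 * Δ) Δ := by
    simpa using (hasDerivAt_pow 2 Δ).const_add (ξm ^ 2)
  have hB' : HasDerivAt (fun x : ℝ => μ ^ 2 + x ^ 2) (2 * Δ) Δ := by
    simpa using (hasDerivAt_pow 2 Δ).const_add (μ ^ 2)
  have hS : HasDerivAt (fun x : ℝ => Real.sqrt (ξm ^ 2 + x ^ 2))
      (Δ / Real.sqrt (ξm ^ 2 + Δ ^ 2)) Δ := by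
    have := hA'.sqrt (ne_of_gt hA)
    convert this using 1
    rw [eq_div_iff (by positivity)]
    field_simp
  have hs : HasDerivAt (fun x : ℝ => Real.sqrt (μ ^ 2 + x ^ 2))
      (Δ / Real.sqrt (μ ^ 2 + Δ ^ 2)) Δ := by
    have := hB'.sqrt (ne_of_gt hB)
    convert this using 1
    rw [eq_div_iff (by positivity)]
    field_simp
  have hlog1 : HasDerivAt (fun x : ℝ => Real.log (μ + Real.sqrt (μ ^ 2 + x ^ 2)))
      ((Δ / Real.sqrt (μ ^ 2 + Δ ^ 2)) / (μ + Real.sqrt (μ ^ 2 + Δ ^ 2))) Δ :=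
    (hs.const_add μ).log (by positivity)
  have hlog2 : HasDerivAt Real.log Δ⁻¹ Δ := Real.hasDerivAt_log (ne_of_gt hΔ)
  exact (hS.sub hs).add (((hlog1.sub hlog2)).const_mul μ)

theorem zero_temp_rhs_strictAnti (ξm μ : ℝ) (hξ : 0 < ξm) (hμ0 : 0 ≤ μ) (hμ : μ ≤ ξm) :
    StrictAntiOn (fun Δ : ℝ =>
      Real.sqrt (ξm ^ 2 + Δ ^ 2) - Real.sqrt (μ ^ 2 + Δ ^ 2)
        + μ * Real.log ((μ + Real.sqrt (μ ^ 2 + Δ ^ 2)) / Δ)) (Set.Ioi 0) := by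
  have hg : StrictAntiOn (fun x : ℝ =>
      Real.sqrt (ξm ^ 2 + x ^ 2) - Real.sqrt (μ ^ 2 + x ^ 2)
        + μ * (Real.log (μ + Real.sqrt (μ ^ 2 + x ^ 2)) - Real.log x)) (Set.Ioi 0) := by
    apply strictAntiOn_of_deriv_neg (convex_Ioi 0)
    · intro x hx
      exact (aux_hasDeriv ξm μ x hξ hμ0 hx).continuousAt.continuousWithinAt
    · rw [interior_Ioi]
      intro Δ hΔ
      rw [Set.mem_Ioi] at hΔ
      rw [(aux_hasDeriv ξm μ Δ hξ hμ0 hΔ).deriv]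
      set S := Real.sqrt (ξm ^ 2 + Δ ^ 2) with hSdef
      set s := Real.sqrt (μ ^ 2 + Δ ^ 2) with hsdef
      have hB : (0:ℝ) < μ ^ 2 + Δ ^ 2 := by positivity
      have hS0 : 0 < S := Real.sqrt_pos.2 (by positivity)
      have hs0 : 0 < s := Real.sqrt_pos.2 hB
      have hs2 : s ^ 2 = μ ^ 2 + Δ ^ 2 := by
        rw [hsdef]
        exact Real.sq_sqrt hB.le
      have hS2 : S ^ 2 = ξm ^ 2 + Δ ^ 2 := by
        rw [hSdef]
        exact Real.sq_sqrt (by positivity)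
      have hΔs : Δ ≤ s := by nlinarith
      have hΔS : Δ < S := by nlinarith
      have hμs : 0 < μ + s := by linarith
      have hD : Δ / S - Δ / s + μ * ((Δ / s) / (μ + s) - Δ⁻¹)
          = Δ / S - (Δ / (μ + s) + μ / Δ) := by
        field_simp
        ring
      rw [hD]
      have h1 : Δ / S < 1 := (div_lt_one hS0).2 hΔS
      have h2 : 1 ≤ Δ / (μ + s) + μ / Δ := by
        rw [div_add_div _ _ (ne_of_gt hμs) (ne_of_gt hΔ), le_div_iff₀ (by positivity)]
        nlinarith
      linarith
  intro a ha b hb hab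
  have key := hg ha hb hab
  simp only [Set.mem_Ioi] at ha hb
  have hsa : (0:ℝ) < μ + Real.sqrt (μ ^ 2 + a ^ 2) := by
    have := Real.sqrt_pos.2 (show (0:ℝ) < μ ^ 2 + a ^ 2 by positivity)
    linarith
  have hsb : (0:ℝ) < μ + Real.sqrt (μ ^ 2 + b ^ 2) := by
    have := Real.sqrt_pos.2 (show (0:ℝ) < μ ^ 2 + b ^ 2 by positivity)
    linarith
  simpa [Real.log_div (ne_of_gt hsa) (ne_of_gt ha),
    Real.log_div (ne_of_gt hsb) (ne_of_gt hb)] using key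
end

section
/- For any ξ_m > 0, λ > 0, and μ ∈ (0, ξ_m], the zero-temperature doping-modified BCS equation ξ_m/λ = sqrt(ξ_m² + Δ²) − sqrt(μ² + Δ²) + μ·log((μ + sqrt(μ² + Δ²))/Δ) has exactly one solution Δ > 0. -/
open Real Set

noncomputable def Fgap (ξm μ Δ : ℝ) : ℝ :=
  Real.sqrt (ξm ^ 2 + Δ ^ 2) - Real.sqrt (μ ^ 2 + Δ ^ 2)
    + μ * Real.log ((μ + Real.sqrt (μ ^ 2 + Δ ^ 2)) / Δ)

lemma sqrt_diff_eq (ξm μ Δ : ℝ) (hξ : 0 < ξm) (hμ0 : 0 ≤ μ) :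
    Real.sqrt (ξm ^ 2 + Δ ^ 2) - Real.sqrt (μ ^ 2 + Δ ^ 2)
      = (ξm ^ 2 - μ ^ 2) / (Real.sqrt (ξm ^ 2 + Δ ^ 2) + Real.sqrt (μ ^ 2 + Δ ^ 2)) := by
  have hS : Real.sqrt (ξm ^ 2 + Δ ^ 2) ^ 2 = ξm ^ 2 + Δ ^ 2 := Real.sq_sqrt (by positivity)
  have hs : Real.sqrt (μ ^ 2 + Δ ^ 2) ^ 2 = μ ^ 2 + Δ ^ 2 := Real.sq_sqrt (by positivity)
  have hSpos : 0 < Real.sqrt (ξm ^ 2 + Δ ^ 2) := Real.sqrt_pos.2 (by positivity)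
  have hsnn : 0 ≤ Real.sqrt (μ ^ 2 + Δ ^ 2) := Real.sqrt_nonneg _
  have hden : 0 < Real.sqrt (ξm ^ 2 + Δ ^ 2) + Real.sqrt (μ ^ 2 + Δ ^ 2) := by linarith
  field_simp
  nlinarith [hS, hs]

lemma Fgap_strictAnti (ξm μ : ℝ) (hξ : 0 < ξm) (hμ0 : 0 < μ) (hμ : μ ≤ ξm) :
    StrictAntiOn (Fgap ξm μ) (Set.Ioi 0) := by
  intro x hx y hy hxy
  simp only [Set.mem_Ioi] at hx hy
  have hsx : Real.sqrt (μ ^ 2 + x ^ 2) ^ 2 = μ ^ 2 + x ^ 2 := Real.sq_sqrt (by positivity)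
  have hsy : Real.sqrt (μ ^ 2 + y ^ 2) ^ 2 = μ ^ 2 + y ^ 2 := Real.sq_sqrt (by positivity)
  have hsxpos : 0 < Real.sqrt (μ ^ 2 + x ^ 2) := Real.sqrt_pos.2 (by positivity)
  have hsypos : 0 < Real.sqrt (μ ^ 2 + y ^ 2) := Real.sqrt_pos.2 (by positivity)
  -- first part: sqrt difference is antitone
  have h1 : Real.sqrt (ξm ^ 2 + y ^ 2) - Real.sqrt (μ ^ 2 + y ^ 2)
      ≤ Real.sqrt (ξm ^ 2 + x ^ 2) - Real.sqrt (μ ^ 2 + x ^ 2) := by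
    rw [sqrt_diff_eq ξm μ x hξ hμ0.le, sqrt_diff_eq ξm μ y hξ hμ0.le]
    have hnum : 0 ≤ ξm ^ 2 - μ ^ 2 := by nlinarith
    have hdx : 0 < Real.sqrt (ξm ^ 2 + x ^ 2) + Real.sqrt (μ ^ 2 + x ^ 2) := by
      have := Real.sqrt_pos.2 (show (0:ℝ) < ξm ^ 2 + x ^ 2 by positivity); linarith
    have hle1 : Real.sqrt (ξm ^ 2 + x ^ 2) ≤ Real.sqrt (ξm ^ 2 + y ^ 2) :=
      Real.sqrt_le_sqrt (by nlinarith)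
    have hle2 : Real.sqrt (μ ^ 2 + x ^ 2) ≤ Real.sqrt (μ ^ 2 + y ^ 2) :=
      Real.sqrt_le_sqrt (by nlinarith)
    gcongr
  -- second part: log term strictly antitone
  have harg : (μ + Real.sqrt (μ ^ 2 + y ^ 2)) / y < (μ + Real.sqrt (μ ^ 2 + x ^ 2)) / x := by
    rw [div_lt_div_iff₀ hy hx]
    have key : Real.sqrt (μ ^ 2 + y ^ 2) * x ≤ Real.sqrt (μ ^ 2 + x ^ 2) * y := by
      have e1 : Real.sqrt (μ ^ 2 + y ^ 2) * x = Real.sqrt ((μ ^ 2 + y ^ 2) * x ^ 2) := by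
        rw [Real.sqrt_mul (by positivity), Real.sqrt_sq hx.le]
      have e2 : Real.sqrt (μ ^ 2 + x ^ 2) * y = Real.sqrt ((μ ^ 2 + x ^ 2) * y ^ 2) := by
        rw [Real.sqrt_mul (by positivity), Real.sqrt_sq hy.le]
      rw [e1, e2]
      apply Real.sqrt_le_sqrt
      have hxy2 : x ^ 2 ≤ y ^ 2 := by nlinarith
      nlinarith [sq_nonneg μ]
    nlinarith
  have hargy : 0 < (μ + Real.sqrt (μ ^ 2 + y ^ 2)) / y := by positivity
  have h2 : μ * Real.log ((μ + Real.sqrt (μ ^ 2 + y ^ 2)) / y)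
      < μ * Real.log ((μ + Real.sqrt (μ ^ 2 + x ^ 2)) / x) := by
    exact mul_lt_mul_of_pos_left (Real.log_lt_log hargy harg) hμ0
  unfold Fgap
  linarith

lemma Fgap_continuousOn (ξm μ : ℝ) (a b : ℝ) (ha : 0 < a) (hμ0 : 0 < μ) :
    ContinuousOn (Fgap ξm μ) (Set.Icc a b) := by
  unfold Fgap
  apply ContinuousOn.add
  · fun_prop
  · apply ContinuousOn.mul continuousOn_const
    apply ContinuousOn.log
    · apply ContinuousOn.div
      · fun_prop
      · fun_prop
      · intro x hx
        have : 0 < x := lt_of_lt_of_le ha hx.1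
        exact this.ne'
    · intro x hx
      have hx0 : 0 < x := lt_of_lt_of_le ha hx.1
      positivity

theorem zero_temp_gap_exists_unique (ξm lam μ : ℝ) (hξ : 0 < ξm) (hlam : 0 < lam)
    (hμ0 : 0 < μ) (hμ : μ ≤ ξm) :
    ∃! Δ : ℝ, 0 < Δ ∧
      ξm / lam = Real.sqrt (ξm ^ 2 + Δ ^ 2) - Real.sqrt (μ ^ 2 + Δ ^ 2)
        + μ * Real.log ((μ + Real.sqrt (μ ^ 2 + Δ ^ 2)) / Δ) := by
  obtain ⟨a, ha_def⟩ : ∃ x : ℝ, x = μ * Real.exp (-(ξm / (lam * μ))) := ⟨_, rfl⟩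
  obtain ⟨C, hC_def⟩ : ∃ x : ℝ, x = ξm ^ 2 / 2 + 2 * μ ^ 2 := ⟨_, rfl⟩
  obtain ⟨b, hb_def⟩ : ∃ x : ℝ, x = max (a + 1) (lam * C / ξm) := ⟨_, rfl⟩
  have hC : 0 < C := by rw [hC_def]; positivity
  have ha : 0 < a := by rw [ha_def]; positivity
  have hab : a ≤ b := by rw [hb_def]; exact le_trans (by linarith) (le_max_left _ _)
  have hb0 : 0 < b := lt_of_lt_of_le ha hab
  have hbC : lam * C / ξm ≤ b := by rw [hb_def]; exact le_max_right _ _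
  -- lower bound at a : Fgap a ≥ ξm / lam
  have hFa : ξm / lam ≤ Fgap ξm μ a := by
    have hsa : 0 < Real.sqrt (μ ^ 2 + a ^ 2) := Real.sqrt_pos.2 (by positivity)
    have h1 : Real.sqrt (μ ^ 2 + a ^ 2) ≤ Real.sqrt (ξm ^ 2 + a ^ 2) :=
      Real.sqrt_le_sqrt (by nlinarith)
    have hμa : μ / a = Real.exp (ξm / (lam * μ)) := by
      rw [ha_def]
      rw [Real.exp_neg]
      field_simp
    have hlogμa : Real.log (μ / a) = ξm / (lam * μ) := by
      rw [hμa, Real.log_exp]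
    have h2 : Real.log (μ / a) ≤ Real.log ((μ + Real.sqrt (μ ^ 2 + a ^ 2)) / a) := by
      apply Real.log_le_log (by positivity)
      gcongr
      linarith [Real.sqrt_nonneg (μ ^ 2 + a ^ 2)]
    have h3 : ξm / lam ≤ μ * Real.log ((μ + Real.sqrt (μ ^ 2 + a ^ 2)) / a) := by
      have : μ * Real.log (μ / a) = ξm / lam := by
        rw [hlogμa]; field_simp
      nlinarith
    unfold Fgap
    linarith
  -- upper bound at b : Fgap b ≤ ξm / lam
  have hFb : Fgap ξm μ b ≤ ξm / lam := by
    have hSb2 : Real.sqrt (ξm ^ 2 + b ^ 2) ^ 2 = ξm ^ 2 + b ^ 2 := Real.sq_sqrt (by positivity)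
    have hsb2 : Real.sqrt (μ ^ 2 + b ^ 2) ^ 2 = μ ^ 2 + b ^ 2 := Real.sq_sqrt (by positivity)
    have hSb_ge : b ≤ Real.sqrt (ξm ^ 2 + b ^ 2) := by
      rw [Real.le_sqrt hb0.le (by positivity)]
      nlinarith
    have hsb_ge : b ≤ Real.sqrt (μ ^ 2 + b ^ 2) := by
      rw [Real.le_sqrt hb0.le (by positivity)]
      nlinarith
    have hsb_le : Real.sqrt (μ ^ 2 + b ^ 2) ≤ μ + b := by
      exact (Real.sqrt_le_sqrt (by nlinarith)).trans_eq (Real.sqrt_sq (by positivity))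
    have hterm1 : Real.sqrt (ξm ^ 2 + b ^ 2) - Real.sqrt (μ ^ 2 + b ^ 2) ≤ ξm ^ 2 / (2 * b) := by
      rw [sqrt_diff_eq ξm μ b hξ hμ0.le]
      apply div_le_div₀ (sq_nonneg ξm) (by nlinarith) (by positivity) (by linarith)
    have hargpos : 0 < (μ + Real.sqrt (μ ^ 2 + b ^ 2)) / b := by positivity
    have hlogle : Real.log ((μ + Real.sqrt (μ ^ 2 + b ^ 2)) / b)
        ≤ (μ + Real.sqrt (μ ^ 2 + b ^ 2)) / b - 1 := Real.log_le_sub_one_of_pos hargpos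
    have hterm2 : μ * Real.log ((μ + Real.sqrt (μ ^ 2 + b ^ 2)) / b) ≤ 2 * μ ^ 2 / b := by
      have h4 : (μ + Real.sqrt (μ ^ 2 + b ^ 2)) / b - 1 ≤ 2 * μ / b := by
        rw [div_sub_one hb0.ne', div_le_div_iff₀ hb0 hb0]
        nlinarith
      have h5 : Real.log ((μ + Real.sqrt (μ ^ 2 + b ^ 2)) / b) ≤ 2 * μ / b := le_trans hlogle h4
      calc μ * Real.log ((μ + Real.sqrt (μ ^ 2 + b ^ 2)) / b) ≤ μ * (2 * μ / b) :=
            mul_le_mul_of_nonneg_left h5 hμ0.le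
        _ = 2 * μ ^ 2 / b := by ring
    have hCb : C / b ≤ ξm / lam := by
      rw [div_le_div_iff₀ hb0 hlam]
      have h6 : lam * C ≤ b * ξm := (div_le_iff₀ hξ).1 hbC
      linarith [mul_comm C lam, mul_comm b ξm]
    unfold Fgap
    have : ξm ^ 2 / (2 * b) + 2 * μ ^ 2 / b = C / b := by
      rw [hC_def]; field_simp
    linarith
  -- IVT
  have hmem : ξm / lam ∈ Set.Icc (Fgap ξm μ b) (Fgap ξm μ a) := ⟨hFb, hFa⟩
  have hiv := intermediate_value_Icc' hab (Fgap_continuousOn ξm μ a b ha hμ0)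
  obtain ⟨Δ, hΔmem, hΔeq⟩ := hiv hmem
  have hΔpos : 0 < Δ := lt_of_lt_of_le ha hΔmem.1
  refine ⟨Δ, ⟨hΔpos, ?_⟩, ?_⟩
  · simpa [Fgap] using hΔeq.symm
  · rintro y ⟨hy0, hyeq⟩
    have hFy : Fgap ξm μ y = Fgap ξm μ Δ := by
      have h7 : Fgap ξm μ y = ξm / lam := by simpa [Fgap] using hyeq.symm
      rw [h7, hΔeq]
    exact (Fgap_strictAnti ξm μ hξ hμ0 hμ).injOn hy0 hΔpos hFy
end

section
/- For every λ > 0, the inequality (1/2)(λ − 1/λ) < 1/sinh(1/λ) holds. -/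
lemma exp_upper {t : ℝ} (h0 : 0 ≤ t) (h1 : t ≤ 1) : Real.exp t ≤ 1 + t + t ^ 2 := by
  have h := Real.exp_bound' h0 h1 (n := 2) (by norm_num)
  norm_num [Finset.sum_range_succ, Nat.factorial] at h
  nlinarith [sq_nonneg t]

lemma key {t : ℝ} (h0 : 0 < t) (h1 : t < 1) : (1 - t ^ 2) * Real.sinh t < 2 * t := by
  set u := Real.exp t with hu
  have hupos : 0 < u := Real.exp_pos t
  have hu1 : 1 + t ≤ u := by linarith [Real.add_one_le_exp t]
  have hu2 : u ≤ 1 + t + t ^ 2 := exp_upper h0.le h1.le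
  have hs : Real.sinh t = (u - u⁻¹) / 2 := by
    rw [Real.sinh_eq, hu, Real.exp_neg]
  rw [hs]
  have huinv : u * u⁻¹ = 1 := mul_inv_cancel₀ hupos.ne'
  have key' : (1 - t ^ 2) * (u ^ 2 - 1) < 4 * t * u := by
    nlinarith [mul_pos h0 hupos, sq_nonneg (u - 1 - t), sq_nonneg t, mul_pos h0 h0,
      mul_nonneg (mul_nonneg h0.le h0.le) h0.le, sq_nonneg (1 - t)]
  have hident : (1 - t ^ 2) * ((u - u⁻¹) / 2) * u = (1 - t ^ 2) * (u ^ 2 - 1) / 2 := by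
    field_simp
  have h2 : (1 - t ^ 2) * ((u - u⁻¹) / 2) * u < 2 * t * u := by
    rw [hident]; linarith
  exact lt_of_mul_lt_mul_right h2 hupos.le

theorem self_consistency (lam : ℝ) (hlam : 0 < lam) :
    (1 / 2) * (lam - 1 / lam) < 1 / Real.sinh (1 / lam) := by
  have ht : 0 < 1 / lam := by positivity
  have hs : 0 < Real.sinh (1 / lam) := Real.sinh_pos_iff.mpr ht
  rw [lt_div_iff₀ hs]
  rcases le_or_gt lam 1 with h | h
  · have h1 : lam - 1 / lam ≤ 0 := by
      rw [sub_nonpos, le_div_iff₀ hlam]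
      nlinarith
    nlinarith [mul_nonpos_of_nonpos_of_nonneg h1 hs.le]
  · set t := 1 / lam with htdef
    have ht1 : t < 1 := by
      rw [htdef, div_lt_one hlam]; exact h
    have hk := key ht ht1
    have h1 : lam - 1 / lam = (1 - t ^ 2) / t := by
      rw [htdef]
      field_simp
    have h2 : (1 / 2) * ((1 - t ^ 2) / t) * Real.sinh t
        = (1 - t ^ 2) * Real.sinh t / (2 * t) := by
      field_simp
    rw [h1, h2, div_lt_one (by positivity)]
    linarith
end

section
/- Fix ξ_m > 0 and λ > 0. If Δ₀(μ) denotes the unique positive solution of the zero-temperature gap equation ξ_m/λ = sqrt(ξ_m² + Δ²) − sqrt(μ² + Δ²) + μ·log((μ + sqrt(μ² + Δ²))/Δ), then Δ₀ is strictly increasing in μ on (0, ξ_m). -/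
open Real Set

lemma hd_sqrt_left (c x : ℝ) (h : x ^ 2 + c ^ 2 ≠ 0) :
    HasDerivAt (fun t => Real.sqrt (t ^ 2 + c ^ 2)) (x / Real.sqrt (x ^ 2 + c ^ 2)) x := by
  have h1 : HasDerivAt (fun t : ℝ => t ^ 2 + c ^ 2) (2 * x) x := by
    simpa using (hasDerivAt_pow 2 x).add_const (c ^ 2)
  have := h1.sqrt h
  have hs : Real.sqrt (x ^ 2 + c ^ 2) ≠ 0 := by
    have : 0 < x ^ 2 + c ^ 2 := lt_of_le_of_ne (by positivity) (Ne.symm h)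
    exact (Real.sqrt_pos.mpr this).ne'
  convert this using 1
  field_simp

lemma hd_sqrt_right (c x : ℝ) (h : c ^ 2 + x ^ 2 ≠ 0) :
    HasDerivAt (fun t => Real.sqrt (c ^ 2 + t ^ 2)) (x / Real.sqrt (c ^ 2 + x ^ 2)) x := by
  have h1 : HasDerivAt (fun t : ℝ => c ^ 2 + t ^ 2) (2 * x) x := by
    simpa using ((hasDerivAt_pow 2 x).const_add (c ^ 2))
  have := h1.sqrt h
  have hs : Real.sqrt (c ^ 2 + x ^ 2) ≠ 0 := by
    have : 0 < c ^ 2 + x ^ 2 := lt_of_le_of_ne (by positivity) (Ne.symm h)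
    exact (Real.sqrt_pos.mpr this).ne'
  convert this using 1
  field_simp

lemma Fgap_mono_mu (ξm Δ : ℝ) (hΔ : 0 < Δ) {a b : ℝ} (ha : 0 < a) (hab : a < b) :
    Fgap ξm a Δ < Fgap ξm b Δ := by
  set h : ℝ → ℝ := fun μ =>
    Real.sqrt (ξm ^ 2 + Δ ^ 2) - Real.sqrt (μ ^ 2 + Δ ^ 2)
      + μ * (Real.log (μ + Real.sqrt (μ ^ 2 + Δ ^ 2)) - Real.log Δ) with hh
  have hder : ∀ x ∈ Ioi (0:ℝ), HasDerivAt h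
      (Real.log (x + Real.sqrt (x ^ 2 + Δ ^ 2)) - Real.log Δ) x := by
    intro x hx
    have hx0 : (0:ℝ) < x := hx
    set s := Real.sqrt (x ^ 2 + Δ ^ 2) with hsdef
    have hsp : 0 < s := Real.sqrt_pos.mpr (by positivity)
    have hxs : 0 < x + s := by linarith
    have h1 : HasDerivAt (fun μ => Real.sqrt (μ ^ 2 + Δ ^ 2)) (x / s) x :=
      hd_sqrt_left Δ x (by positivity)
    have h2 : HasDerivAt (fun μ => μ + Real.sqrt (μ ^ 2 + Δ ^ 2)) (1 + x / s) x :=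
      (hasDerivAt_id x).add h1
    have h3 : HasDerivAt (fun μ => Real.log (μ + Real.sqrt (μ ^ 2 + Δ ^ 2)))
        ((1 + x / s) / (x + s)) x := by
      have := h2.log (by simpa using hxs.ne')
      simpa using this
    have h4 := h3.sub_const (Real.log Δ)
    have h5 := (hasDerivAt_id x).mul h4
    have h6 := ((hasDerivAt_const x (Real.sqrt (ξm ^ 2 + Δ ^ 2))).sub h1).add h5
    convert h6 using 1
    case e'_4 | e'_5 | e'_8 => rfl
    have : x * ((1 + x / s) / (x + s)) = x / s := by
      field_simp
      ring
    simp only [id_eq]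
    rw [this]
    ring
  have hmono : StrictMonoOn h (Ioi 0) := by
    apply strictMonoOn_of_deriv_pos (convex_Ioi 0)
    · intro x hx
      exact (hder x hx).continuousAt.continuousWithinAt
    · intro x hx
      rw [interior_Ioi] at hx
      rw [(hder x hx).deriv]
      have hx0 : (0:ℝ) < x := hx
      have hs : Δ ≤ Real.sqrt (x ^ 2 + Δ ^ 2) := by
        nlinarith [Real.sq_sqrt (show (0:ℝ) ≤ x ^ 2 + Δ ^ 2 by positivity),
          Real.sqrt_nonneg (x ^ 2 + Δ ^ 2)]
      have : Δ < x + Real.sqrt (x ^ 2 + Δ ^ 2) := by linarith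
      have := Real.log_lt_log hΔ this
      linarith
  have key := hmono (mem_Ioi.mpr ha) (mem_Ioi.mpr (ha.trans hab)) hab
  have heq : ∀ x : ℝ, 0 < x → Fgap ξm x Δ = h x := by
    intro x hx0
    have hsp : 0 < Real.sqrt (x ^ 2 + Δ ^ 2) := Real.sqrt_pos.mpr (by positivity)
    have hxs : 0 < x + Real.sqrt (x ^ 2 + Δ ^ 2) := by linarith
    simp only [Fgap, hh]
    rw [Real.log_div hxs.ne' hΔ.ne']
  rw [heq a ha, heq b (ha.trans hab)]
  exact key

lemma Fgap_anti_delta (ξm μ : ℝ) (hξ : 0 < ξm) (hμ : 0 < μ) :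
    StrictAntiOn (fun Δ => Fgap ξm μ Δ) (Ioi 0) := by
  set g : ℝ → ℝ := fun Δ =>
    Real.sqrt (ξm ^ 2 + Δ ^ 2) - Real.sqrt (μ ^ 2 + Δ ^ 2)
      + μ * (Real.log (μ + Real.sqrt (μ ^ 2 + Δ ^ 2)) - Real.log Δ) with hg
  have hder : ∀ d ∈ Ioi (0:ℝ), HasDerivAt g
      (d / Real.sqrt (ξm ^ 2 + d ^ 2) - Real.sqrt (μ ^ 2 + d ^ 2) / d) d := by
    intro d hd
    have hd0 : (0:ℝ) < d := hd
    set S := Real.sqrt (ξm ^ 2 + d ^ 2) with hSdef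
    set s := Real.sqrt (μ ^ 2 + d ^ 2) with hsdef
    have hSp : 0 < S := Real.sqrt_pos.mpr (by positivity)
    have hsp : 0 < s := Real.sqrt_pos.mpr (by positivity)
    have hms : 0 < μ + s := by linarith
    have hs2 : s ^ 2 = μ ^ 2 + d ^ 2 := Real.sq_sqrt (by positivity)
    have g1 : HasDerivAt (fun Δ => Real.sqrt (ξm ^ 2 + Δ ^ 2)) (d / S) d :=
      hd_sqrt_right ξm d (by positivity)
    have g2 : HasDerivAt (fun Δ => Real.sqrt (μ ^ 2 + Δ ^ 2)) (d / s) d :=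
      hd_sqrt_right μ d (by positivity)
    have g3 : HasDerivAt (fun Δ => μ + Real.sqrt (μ ^ 2 + Δ ^ 2)) (d / s) d :=
      g2.const_add μ
    have g4 : HasDerivAt (fun Δ => Real.log (μ + Real.sqrt (μ ^ 2 + Δ ^ 2)))
        ((d / s) / (μ + s)) d := by
      have := g3.log (by simpa using hms.ne')
      simpa using this
    have g5 : HasDerivAt (fun Δ => Real.log (μ + Real.sqrt (μ ^ 2 + Δ ^ 2)) - Real.log Δ)
        ((d / s) / (μ + s) - d⁻¹) d := g4.sub (Real.hasDerivAt_log hd0.ne')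
    have g6 := (g1.sub g2).add (g5.const_mul μ)
    convert g6 using 1
    case e'_4 | e'_5 | e'_8 => rfl
    field_simp
    linear_combination (- s*S) * hs2
  have hanti : StrictAntiOn g (Ioi 0) := by
    apply strictAntiOn_of_deriv_neg (convex_Ioi 0)
    · intro x hx
      exact (hder x hx).continuousAt.continuousWithinAt
    · intro d hd
      rw [interior_Ioi] at hd
      rw [(hder d hd).deriv]
      have hd0 : (0:ℝ) < d := hd
      have hSp : 0 < Real.sqrt (ξm ^ 2 + d ^ 2) := Real.sqrt_pos.mpr (by positivity)
      have hsp : 0 < Real.sqrt (μ ^ 2 + d ^ 2) := Real.sqrt_pos.mpr (by positivity)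
      have hdS : d < Real.sqrt (ξm ^ 2 + d ^ 2) := by
        nlinarith [Real.sq_sqrt (show (0:ℝ) ≤ ξm ^ 2 + d ^ 2 by positivity)]
      have hds : d < Real.sqrt (μ ^ 2 + d ^ 2) := by
        nlinarith [Real.sq_sqrt (show (0:ℝ) ≤ μ ^ 2 + d ^ 2 by positivity)]
      rw [sub_neg, div_lt_div_iff₀ hSp hd0]
      nlinarith
  intro d1 hd1 d2 hd2 hlt
  have heq : ∀ d : ℝ, 0 < d → Fgap ξm μ d = g d := by
    intro d hd0
    have hsp : 0 < Real.sqrt (μ ^ 2 + d ^ 2) := Real.sqrt_pos.mpr (by positivity)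
    have hms : 0 < μ + Real.sqrt (μ ^ 2 + d ^ 2) := by linarith
    simp only [Fgap, hg]
    rw [Real.log_div hms.ne' hd0.ne']
  simp only [heq d1 hd1, heq d2 hd2]
  exact hanti hd1 hd2 hlt

theorem zero_temp_gap_strictMono_in_doping (ξm lam : ℝ) (hξ : 0 < ξm) (hlam : 0 < lam)
    (Δ₀ : ℝ → ℝ)
    (hΔ : ∀ μ ∈ Set.Ioo (0 : ℝ) ξm, 0 < Δ₀ μ ∧
      ξm / lam = Real.sqrt (ξm ^ 2 + Δ₀ μ ^ 2) - Real.sqrt (μ ^ 2 + Δ₀ μ ^ 2)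
        + μ * Real.log ((μ + Real.sqrt (μ ^ 2 + Δ₀ μ ^ 2)) / Δ₀ μ)) :
    StrictMonoOn Δ₀ (Set.Ioo 0 ξm) := by
  intro μ₁ h₁ μ₂ h₂ hlt
  obtain ⟨hd₁, he₁⟩ := hΔ μ₁ h₁
  obtain ⟨hd₂, he₂⟩ := hΔ μ₂ h₂
  have e1 : Fgap ξm μ₁ (Δ₀ μ₁) = Fgap ξm μ₂ (Δ₀ μ₂) := by
    simp only [Fgap]; rw [← he₁, ← he₂]
  by_contra hcon
  push_neg at hcon
  have hA : Fgap ξm μ₁ (Δ₀ μ₁) < Fgap ξm μ₂ (Δ₀ μ₁) :=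
    Fgap_mono_mu ξm (Δ₀ μ₁) hd₁ h₁.1 hlt
  have hB : Fgap ξm μ₂ (Δ₀ μ₁) ≤ Fgap ξm μ₂ (Δ₀ μ₂) := by
    rcases eq_or_lt_of_le hcon with h | h
    · rw [h]
    · exact le_of_lt (Fgap_anti_delta ξm μ₂ hξ h₂.1 (mem_Ioi.mpr hd₂) (mem_Ioi.mpr hd₁) h)
  linarith
end

section
/- For ξ_m > 0, μ ∈ (0, ξ_m), and λ > 1, the unique positive zero-temperature gap Δ₀(μ, λ) satisfies the strict bounds (ξ_m/2)(λ − 1/λ) < Δ₀(μ, λ) < ξ_m/sinh(1/λ). -/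
private lemma log_ge_aux (x : ℝ) (hx : 0 < x) : 1 - 1 / x ≤ Real.log x := by
  have h := Real.log_le_sub_one_of_pos (x := 1 / x) (by positivity)
  rw [Real.log_div one_ne_zero (ne_of_gt hx), Real.log_one] at h
  linarith

set_option maxHeartbeats 1000000 in
theorem zero_temp_gap_bounds (ξm lam μ Δ : ℝ) (hξ : 0 < ξm) (hlam : 1 < lam)
    (hμ0 : 0 < μ) (hμ : μ < ξm) (hΔ : 0 < Δ)
    (heq : ξm / lam = Real.sqrt (ξm ^ 2 + Δ ^ 2) - Real.sqrt (μ ^ 2 + Δ ^ 2)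
        + μ * Real.log ((μ + Real.sqrt (μ ^ 2 + Δ ^ 2)) / Δ)) :
    ξm / 2 * (lam - 1 / lam) < Δ ∧ Δ < ξm / Real.sinh (1 / lam) := by
  set S := Real.sqrt (ξm ^ 2 + Δ ^ 2) with hSdef
  set s := Real.sqrt (μ ^ 2 + Δ ^ 2) with hsdef
  set A := Real.log ((μ + s) / Δ) with hAdef
  set B := Real.log ((ξm + S) / Δ) with hBdef
  have hS2 : S ^ 2 = ξm ^ 2 + Δ ^ 2 := Real.sq_sqrt (by positivity)
  have hs2 : s ^ 2 = μ ^ 2 + Δ ^ 2 := Real.sq_sqrt (by positivity)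
  have hSpos : 0 < S := Real.sqrt_pos.2 (by positivity)
  have hspos : 0 < s := Real.sqrt_pos.2 (by positivity)
  have hΔs : Δ < s := by nlinarith
  have hsS : s < S := by nlinarith
  have hlam0 : 0 < lam := lt_trans one_pos hlam
  -- lower bound on A : A > μ/(s+Δ)
  have hA : μ / (s + Δ) < A := by
    have h1 : 1 - Δ / (μ + s) ≤ A := by
      have h := log_ge_aux ((μ + s) / Δ) (by positivity)
      rwa [one_div_div] at h
    have h2 : μ / (s + Δ) < 1 - Δ / (μ + s) := by
      rw [show (1 : ℝ) - Δ / (μ + s) = (μ + s - Δ) / (μ + s) by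
        field_simp, div_lt_div_iff₀ (by positivity) (by positivity)]
      nlinarith
    linarith
  -- μ * A > s - Δ
  have hμA : s - Δ < μ * A := by
    have h := mul_lt_mul_of_pos_left hA hμ0
    have h2 : s - Δ ≤ μ * (μ / (s + Δ)) := by
      rw [mul_div_assoc', le_div_iff₀ (by positivity)]
      nlinarith
    linarith
  -- Lower bound
  have hSlt : S < Δ + ξm / lam := by linarith
  have hlow : ξm / 2 * (lam - 1 / lam) < Δ := by
    have hsq : ξm ^ 2 + Δ ^ 2 < (Δ + ξm / lam) ^ 2 := by
      calc ξm ^ 2 + Δ ^ 2 = S ^ 2 := hS2.symm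
        _ < (Δ + ξm / lam) ^ 2 := by
            exact pow_lt_pow_left₀ hSlt hSpos.le (by norm_num)
    set c := 1 / lam with hcdef
    have hc : lam * c = 1 := by rw [hcdef, mul_one_div, div_self hlam0.ne']
    have hc2 : lam * c ^ 2 = c := by
      rw [pow_two, ← mul_assoc, hc, one_mul]
    have hcpos : 0 < c := by positivity
    have hdc : ξm / lam = ξm * c := by rw [hcdef, div_eq_mul_one_div]
    rw [hdc] at hsq
    have h4 : ξm ^ 2 * (1 - c ^ 2) < 2 * Δ * ξm * c := by
      have e : (Δ + ξm * c) ^ 2 = Δ ^ 2 + 2 * Δ * ξm * c + ξm ^ 2 * c ^ 2 := by ring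
      rw [e] at hsq; nlinarith [hsq]
    have h5 := mul_lt_mul_of_pos_left h4 hlam0
    have e5 : lam * (ξm ^ 2 * (1 - c ^ 2)) = ξm ^ 2 * lam - ξm ^ 2 * (lam * c ^ 2) := by
      ring
    have e6 : lam * (2 * Δ * ξm * c) = 2 * Δ * ξm * (lam * c) := by ring
    rw [e5, e6, hc2, hc, mul_one] at h5
    have h6 : ξm ^ 2 * (lam - c) < 2 * Δ * ξm := by nlinarith [h5]
    nlinarith [h6, hξ]
  refine ⟨hlow, ?_⟩
  -- Upper bound
  have hBA : 1 - (μ + s) / (ξm + S) ≤ B - A := by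
    have h := log_ge_aux ((ξm + S) / (μ + s)) (by positivity)
    rw [one_div_div] at h
    have e : B - A = Real.log ((ξm + S) / (μ + s)) := by
      rw [hBdef, hAdef, Real.log_div (by positivity) (ne_of_gt hΔ),
        Real.log_div (by positivity) (ne_of_gt hΔ),
        Real.log_div (by positivity) (by positivity)]
      ring
    linarith [e ▸ h]
  -- the key fraction inequality
  have hfrac : S - s + ξm * ((μ + s) / (ξm + S)) ≤ ξm + (ξm - μ) * (μ / (s + S)) := by
    rw [← sub_nonneg]
    have e : ξm + (ξm - μ) * (μ / (s + S)) - (S - s + ξm * ((μ + s) / (ξm + S)))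
        = (ξm * ((ξm + S) * (s + S)) + (ξm - μ) * μ * (ξm + S)
          - (S - s) * ((ξm + S) * (s + S)) - ξm * (μ + s) * (s + S))
          / ((ξm + S) * (s + S)) := by
      field_simp
      ring
    rw [e]
    apply div_nonneg _ (by positivity)
    nlinarith [hS2, hs2, mul_nonneg (mul_nonneg hξ.le (by linarith : (0:ℝ) ≤ ξm - μ))
      (by positivity : (0:ℝ) ≤ s + μ)]
  have hAS : μ / (s + S) ≤ μ / (s + Δ) := by
    apply div_le_div_of_nonneg_left hμ0.le (by positivity)
    linarith
  have hmulA : (ξm - μ) * (μ / (s + Δ)) < (ξm - μ) * A :=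
    mul_lt_mul_of_pos_left hA (by linarith)
  have h1 : ξm * (1 - (μ + s) / (ξm + S)) ≤ ξm * (B - A) :=
    mul_le_mul_of_nonneg_left hBA hξ.le
  have e1 : ξm * (B - A) = ξm * B - ξm * A := by ring
  have e2 : ξm * (1 - (μ + s) / (ξm + S)) = ξm - ξm * ((μ + s) / (ξm + S)) := by ring
  have e3 : ξm * A = (ξm - μ) * A + μ * A := by ring
  have e4 : (ξm - μ) * (μ / (s + S)) ≤ (ξm - μ) * (μ / (s + Δ)) :=
    mul_le_mul_of_nonneg_left hAS (by linarith)
  have hkey : ξm / lam < ξm * B := by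
    rw [heq]; linarith
  have hBgt : 1 / lam < B := by
    have h : ξm * (1 / lam) < ξm * B := by rwa [mul_one_div]
    exact lt_of_mul_lt_mul_left h hξ.le
  -- B = arsinh (ξm / Δ)
  have hsqrt : Real.sqrt (1 + (ξm / Δ) ^ 2) = S / Δ := by
    rw [show 1 + (ξm / Δ) ^ 2 = (ξm ^ 2 + Δ ^ 2) / Δ ^ 2 by field_simp; ring,
      Real.sqrt_div (by positivity), ← hSdef, Real.sqrt_sq hΔ.le]
  have hBar : B = Real.arsinh (ξm / Δ) := by
    rw [Real.arsinh, hsqrt, hBdef, ← add_div]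
  have hsinh : Real.sinh (1 / lam) < ξm / Δ := by
    have h := Real.sinh_lt_sinh.2 (hBar ▸ hBgt)
    rwa [Real.sinh_arsinh] at h
  rw [lt_div_iff₀ (Real.sinh_pos_iff.2 (by positivity))]
  rw [lt_div_iff₀ hΔ] at hsinh
  linarith
end

section
/- For ξ_m > 0 and μ ∈ (0, ξ_m], the function g(u) = u·(sqrt(ξ_m² + u²) − sqrt(μ² + u²) + μ·log((μ + sqrt(μ² + u²))/u)) is strictly increasing on (0, ∞). -/
lemma aux_log_lb (x : ℝ) (hx : 1 < x) : 2*(x-1)/(x+1) < Real.log x := by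
  have key : StrictMonoOn (fun y : ℝ => Real.log y - 2*(y-1)/(y+1)) (Set.Ici 1) := by
    apply strictMonoOn_of_deriv_pos (convex_Ici 1)
    · apply ContinuousOn.sub
      · exact Real.continuousOn_log.mono (fun y hy => by
          simp only [Set.mem_Ici] at hy; simp; intro h; linarith)
      · apply ContinuousOn.div (by fun_prop) (by fun_prop)
        intro y hy; simp only [Set.mem_Ici] at hy; intro h; linarith
    · intro y hy
      rw [interior_Ici] at hy
      simp only [Set.mem_Ioi] at hy
      have hy0 : (0:ℝ) < y := by linarith
      have hy1 : y + 1 ≠ 0 := by linarith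
      have hd : HasDerivAt (fun y : ℝ => Real.log y - 2*(y-1)/(y+1))
          (1/y - (2*(y+1) - 2*(y-1)) / (y+1)^2) y := by
        have h1 : HasDerivAt (fun y : ℝ => 2*(y-1)) 2 y := by
          simpa using (((hasDerivAt_id y).sub_const 1).const_mul (2:ℝ))
        have h2 : HasDerivAt (fun y : ℝ => y+1) 1 y := (hasDerivAt_id y).add_const 1
        have := (Real.hasDerivAt_log (ne_of_gt hy0)).sub (h1.div h2 hy1)
        refine this.congr_deriv ?_
        field_simp
      rw [hd.deriv]
      have h2 : (2*(y+1) - 2*(y-1)) = 4 := by ring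
      rw [h2, sub_pos, div_lt_div_iff₀ (by positivity) hy0]
      nlinarith [sq_nonneg (y-1)]
  have h1 := key Set.self_mem_Ici (Set.mem_Ici.mpr hx.le) hx
  simp only [Real.log_one] at h1
  norm_num at h1
  linarith

theorem zero_temp_g_strictMono (ξm μ : ℝ) (hξ : 0 < ξm) (hμ0 : 0 < μ) (hμ : μ ≤ ξm) :
    StrictMonoOn (fun u : ℝ =>
      u * (Real.sqrt (ξm ^ 2 + u ^ 2) - Real.sqrt (μ ^ 2 + u ^ 2)
        + μ * Real.log ((μ + Real.sqrt (μ ^ 2 + u ^ 2)) / u))) (Set.Ioi 0) := by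
  have hderiv : ∀ u ∈ Set.Ioi (0:ℝ), HasDerivAt (fun u : ℝ =>
      u * (Real.sqrt (ξm ^ 2 + u ^ 2) - Real.sqrt (μ ^ 2 + u ^ 2)
        + μ * Real.log ((μ + Real.sqrt (μ ^ 2 + u ^ 2)) / u)))
      (Real.sqrt (ξm ^ 2 + u ^ 2) + u^2/Real.sqrt (ξm ^ 2 + u ^ 2)
        - 2*Real.sqrt (μ ^ 2 + u ^ 2)
        + μ * Real.log ((μ + Real.sqrt (μ ^ 2 + u ^ 2)) / u)) u := by
    intro u hu
    simp only [Set.mem_Ioi] at hu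
    set T := Real.sqrt (ξm ^ 2 + u ^ 2) with hTdef
    set S := Real.sqrt (μ ^ 2 + u ^ 2) with hSdef
    have hT0 : 0 < T := Real.sqrt_pos.mpr (by positivity)
    have hS0 : 0 < S := Real.sqrt_pos.mpr (by positivity)
    have hT2 : T ^ 2 = ξm ^ 2 + u ^ 2 := Real.sq_sqrt (by positivity)
    have hS2 : S ^ 2 = μ ^ 2 + u ^ 2 := Real.sq_sqrt (by positivity)
    have hA : HasDerivAt (fun v : ℝ => Real.sqrt (ξm ^ 2 + v ^ 2)) (u / T) u := by
      have hin : HasDerivAt (fun v : ℝ => ξm ^ 2 + v ^ 2) (2*u) u := by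
        simpa using ((hasDerivAt_pow 2 u).const_add (ξm^2))
      have := (Real.hasDerivAt_sqrt (show ξm ^ 2 + u ^ 2 ≠ 0 by positivity)).comp u hin
      refine this.congr_deriv ?_
      rw [← hTdef]
      field_simp
    have hB : HasDerivAt (fun v : ℝ => Real.sqrt (μ ^ 2 + v ^ 2)) (u / S) u := by
      have hin : HasDerivAt (fun v : ℝ => μ ^ 2 + v ^ 2) (2*u) u := by
        simpa using ((hasDerivAt_pow 2 u).const_add (μ^2))
      have := (Real.hasDerivAt_sqrt (show μ ^ 2 + u ^ 2 ≠ 0 by positivity)).comp u hin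
      refine this.congr_deriv ?_
      rw [← hSdef]
      field_simp
    have hlog : HasDerivAt (fun v : ℝ => Real.log (μ + Real.sqrt (μ ^ 2 + v ^ 2)))
        ((u / S) / (μ + S)) u := (hB.const_add μ).log (by positivity)
    have hF : HasDerivAt (fun v : ℝ => Real.sqrt (ξm ^ 2 + v ^ 2) - Real.sqrt (μ ^ 2 + v ^ 2)
        + μ * (Real.log (μ + Real.sqrt (μ ^ 2 + v ^ 2)) - Real.log v))
        (u / T - u / S + μ * ((u / S) / (μ + S) - u⁻¹)) u :=
      (hA.sub hB).add ((hlog.sub (Real.hasDerivAt_log (ne_of_gt hu))).const_mul μ)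
    have hprod := (hasDerivAt_id u).mul hF
    have hev : (fun v : ℝ => v * (Real.sqrt (ξm ^ 2 + v ^ 2) - Real.sqrt (μ ^ 2 + v ^ 2)
        + μ * (Real.log (μ + Real.sqrt (μ ^ 2 + v ^ 2)) - Real.log v)))
        =ᶠ[nhds u] (fun u : ℝ =>
      u * (Real.sqrt (ξm ^ 2 + u ^ 2) - Real.sqrt (μ ^ 2 + u ^ 2)
        + μ * Real.log ((μ + Real.sqrt (μ ^ 2 + u ^ 2)) / u))) := by
      filter_upwards [Ioi_mem_nhds hu] with v hv
      have hv0 : (0:ℝ) < v := hv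
      have hS0' : 0 < μ + Real.sqrt (μ ^ 2 + v ^ 2) := by positivity
      rw [Real.log_div (ne_of_gt hS0') (ne_of_gt hv0)]
    have hfinal := hprod.congr_of_eventuallyEq hev.symm
    refine hfinal.congr_deriv ?_
    rw [Real.log_div (by positivity) (ne_of_gt hu), ← hSdef, ← hTdef]
    have huS : μ + S ≠ 0 := by positivity
    simp only [id_eq]
    field_simp
    linear_combination (T*S) * hS2
  apply strictMonoOn_of_deriv_pos (convex_Ioi 0)
  · exact fun u hu => (hderiv u hu).continuousAt.continuousWithinAt
  · intro u hu
    rw [interior_Ioi] at hu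
    rw [(hderiv u hu).deriv]
    simp only [Set.mem_Ioi] at hu
    set T := Real.sqrt (ξm ^ 2 + u ^ 2) with hTdef
    set S := Real.sqrt (μ ^ 2 + u ^ 2) with hSdef
    have hT0 : 0 < T := Real.sqrt_pos.mpr (by positivity)
    have hS0 : 0 < S := Real.sqrt_pos.mpr (by positivity)
    have hT2 : T ^ 2 = ξm ^ 2 + u ^ 2 := Real.sq_sqrt (by positivity)
    have hS2 : S ^ 2 = μ ^ 2 + u ^ 2 := Real.sq_sqrt (by positivity)
    have hSu : u < S := by
      rw [show u = Real.sqrt (u^2) from (Real.sqrt_sq hu.le).symm, hSdef]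
      exact Real.sqrt_lt_sqrt (by positivity) (by nlinarith)
    have hTS : S ≤ T := Real.sqrt_le_sqrt (by nlinarith)
    clear_value T S
    set L := Real.log ((μ + S) / u) with hLdef
    have hx1 : 1 < (μ + S) / u := (one_lt_div hu).mpr (by linarith)
    have hL := aux_log_lb _ hx1
    have heq : 2*((μ + S)/u - 1)/((μ + S)/u + 1) = 2*(μ + S - u)/(μ + S + u) := by
      rw [div_eq_div_iff (by positivity) (by positivity)]
      field_simp
    rw [heq, ← hLdef] at hL
    -- hL : 2*(μ+S-u)/(μ+S+u) < L
    have hST : u^2 < S*T := by nlinarith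
    have h1 : S + u^2/S ≤ T + u^2/T := by
      have hre : T + u^2/T - (S + u^2/S) = (T - S)*(S*T - u^2)/(S*T) := by
        field_simp
        ring
      have : 0 ≤ (T - S)*(S*T - u^2)/(S*T) :=
        div_nonneg (mul_nonneg (by linarith) (by linarith)) (by positivity)
      linarith
    have h2 : μ*(μ/S) < μ*L := by
      apply mul_lt_mul_of_pos_left _ hμ0
      have h4 : μ/S ≤ 2*(μ + S - u)/(μ + S + u) := by
        rw [div_le_div_iff₀ hS0 (by positivity)]
        nlinarith [sq_nonneg (S-u)]
      linarith
    have h3 : μ*(μ/S) = S - u^2/S := by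
      field_simp
      linear_combination (-1 : ℝ) * hS2
    linarith
end

section
/- For ξ_m > 0 and μ ∈ (0, ξ_m], the third derivative of g(u) = u·(sqrt(ξ_m² + u²) − sqrt(μ² + u²) + μ·log((μ + sqrt(μ² + u²))/u)) is g'''(u) = 3ξ_m⁴/(ξ_m² + u²)^{5/2} + μ⁴/(u²(μ² + u²)^{3/2}), which is strictly positive for all u > 0. -/
open Real Filter

noncomputable def sq2 (a u : ℝ) : ℝ := Real.sqrt (a ^ 2 + u ^ 2)

lemma sq2_pos (a u : ℝ) (ha : 0 < a) : 0 < sq2 a u := Real.sqrt_pos.2 (by positivity)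

lemma sq2_sq (a u : ℝ) : sq2 a u ^ 2 = a ^ 2 + u ^ 2 :=
  Real.sq_sqrt (by positivity)

lemma hasDerivAt_sq2 (a u : ℝ) (ha : 0 < a) :
    HasDerivAt (fun u => sq2 a u) (u / sq2 a u) u := by
  have h : HasDerivAt (fun u : ℝ => a ^ 2 + u ^ 2) (2 * u) u := by
    simpa using (hasDerivAt_pow 2 u).const_add (a ^ 2)
  have h2 := h.sqrt (by positivity)
  convert h2 using 1
  have := sq2_pos a u ha
  unfold sq2
  field_simp
  unfold sq2
  ring_nf

noncomputable def g0 (ξm μ u : ℝ) : ℝ :=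
  u * (sq2 ξm u - sq2 μ u + μ * Real.log ((μ + sq2 μ u) / u))

noncomputable def g1 (ξm μ u : ℝ) : ℝ :=
  sq2 ξm u + u ^ 2 / sq2 ξm u - 2 * sq2 μ u + μ * Real.log ((μ + sq2 μ u) / u)

noncomputable def g2 (ξm μ u : ℝ) : ℝ :=
  u * (3 * ξm ^ 2 + 2 * u ^ 2) / (sq2 ξm u) ^ 3 - sq2 μ u / u - u / sq2 μ u

noncomputable def g3 (ξm μ u : ℝ) : ℝ :=
  3 * ξm ^ 4 / (sq2 ξm u) ^ 5 + μ ^ 4 / (u ^ 2 * (sq2 μ u) ^ 3)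

section derivs
variable (ξm μ : ℝ) (hξ : 0 < ξm) (hμ0 : 0 < μ)

include hμ0 in
lemma hasDerivAt_logterm (u : ℝ) (hu : 0 < u) :
    HasDerivAt (fun u => Real.log ((μ + sq2 μ u) / u))
      (-(μ / (sq2 μ u * u))) u := by
  have hs := sq2_pos μ u hμ0
  have hs2 := sq2_sq μ u
  have h1 : HasDerivAt (fun u => μ + sq2 μ u) (u / sq2 μ u) u :=
    (hasDerivAt_sq2 μ u hμ0).const_add μ
  have h2 : HasDerivAt (fun u => Real.log (μ + sq2 μ u))
      ((u / sq2 μ u) / (μ + sq2 μ u)) u := h1.log (by positivity)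
  have h3 : HasDerivAt (fun u : ℝ => Real.log (μ + sq2 μ u) - Real.log u)
      ((u / sq2 μ u) / (μ + sq2 μ u) - 1 / u) u := by
    exact (h2.sub (Real.hasDerivAt_log (ne_of_gt hu))).congr_deriv (by ring)
  have hms : (0:ℝ) < μ + sq2 μ u := by positivity
  have hval : (u / sq2 μ u) / (μ + sq2 μ u) - 1 / u = -(μ / (sq2 μ u * u)) := by
    rw [div_div]
    field_simp
    linear_combination (-1) * hs2
  rw [hval] at h3
  apply h3.congr_of_eventuallyEq
  filter_upwards [Ioi_mem_nhds hu] with v hv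
  exact Real.log_div (ne_of_gt (by have := sq2_pos μ v hμ0; linarith)) (ne_of_gt hv)

include hξ hμ0 in
lemma hasDerivAt_g0 (u : ℝ) (hu : 0 < u) :
    HasDerivAt (g0 ξm μ) (g1 ξm μ u) u := by
  have hs := sq2_pos μ u hμ0
  have hS := sq2_pos ξm u hξ
  have hs2 := sq2_sq μ u
  have hA : HasDerivAt (fun u => sq2 ξm u - sq2 μ u + μ * Real.log ((μ + sq2 μ u) / u))
      (u / sq2 ξm u - u / sq2 μ u + μ * (-(μ / (sq2 μ u * u)))) u :=
    (((hasDerivAt_sq2 ξm u hξ).sub (hasDerivAt_sq2 μ u hμ0)).add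
      ((hasDerivAt_logterm μ hμ0 u hu).const_mul μ))
  have h := (hasDerivAt_id u).mul hA
  have heq : 1 * (sq2 ξm u - sq2 μ u + μ * Real.log ((μ + sq2 μ u) / u))
      + id u * (u / sq2 ξm u - u / sq2 μ u + μ * (-(μ / (sq2 μ u * u))))
      = g1 ξm μ u := by
    unfold g1
    simp only [id]
    field_simp
    linear_combination (sq2 ξm u) * hs2
  rw [heq] at h
  exact h

include hξ hμ0 in
lemma hasDerivAt_g1 (u : ℝ) (hu : 0 < u) :
    HasDerivAt (g1 ξm μ) (g2 ξm μ u) u := by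
  have hs := sq2_pos μ u hμ0
  have hS := sq2_pos ξm u hξ
  have hs2 := sq2_sq μ u
  have hS2 := sq2_sq ξm u
  have h1 : HasDerivAt (fun u => u ^ 2 / sq2 ξm u)
      ((2 * u * sq2 ξm u - u ^ 2 * (u / sq2 ξm u)) / (sq2 ξm u) ^ 2) u := by
    have := (hasDerivAt_pow 2 u).div (hasDerivAt_sq2 ξm u hξ) (ne_of_gt hS)
    exact this.congr_deriv (by norm_num)
  have h : HasDerivAt (g1 ξm μ)
      (u / sq2 ξm u + (2 * u * sq2 ξm u - u ^ 2 * (u / sq2 ξm u)) / (sq2 ξm u) ^ 2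
        - 2 * (u / sq2 μ u) + μ * (-(μ / (sq2 μ u * u)))) u := by
    exact (((hasDerivAt_sq2 ξm u hξ).add h1).sub
      ((hasDerivAt_sq2 μ u hμ0).const_mul 2)).add
      ((hasDerivAt_logterm μ hμ0 u hu).const_mul μ)
  convert h using 1
  unfold g2
  field_simp
  linear_combination (-(3*u^2*sq2 μ u)) * hS2 + (-(sq2 ξm u^3)) * hs2

include hξ hμ0 in
lemma hasDerivAt_g2 (u : ℝ) (hu : 0 < u) :
    HasDerivAt (g2 ξm μ) (g3 ξm μ u) u := by
  have hs := sq2_pos μ u hμ0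
  have hS := sq2_pos ξm u hξ
  have hs2 := sq2_sq μ u
  have hS2 := sq2_sq ξm u
  have hN : HasDerivAt (fun u : ℝ => u * (3 * ξm ^ 2 + 2 * u ^ 2))
      (1 * (3 * ξm ^ 2 + 2 * u ^ 2) + u * (2 * u + 2 * u)) u := by
    have h2 : HasDerivAt (fun u : ℝ => 3 * ξm ^ 2 + 2 * u ^ 2) (2 * u + 2 * u) u := by
      have := ((hasDerivAt_pow 2 u).const_mul 2).const_add (3 * ξm ^ 2)
      simpa using this.congr_deriv (by ring)
    exact (hasDerivAt_id u).mul h2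
  have hD : HasDerivAt (fun u => (sq2 ξm u) ^ 3)
      (3 * sq2 ξm u ^ 2 * (u / sq2 ξm u)) u := by
    have := (hasDerivAt_sq2 ξm u hξ).pow 3
    exact this.congr_deriv (by norm_num)
  have h1 := hN.div hD (by positivity)
  have h2 := (hasDerivAt_sq2 μ u hμ0).div (hasDerivAt_id u) (ne_of_gt hu)
  have h3 := (hasDerivAt_id u).div (hasDerivAt_sq2 μ u hμ0) (ne_of_gt hs)
  have h := (h1.sub h2).sub h3
  refine h.congr_deriv (Eq.symm ?_)
  unfold g3
  simp only [id]
  field_simp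
  ring_nf
  linear_combination (- 3*u^2*sq2 μ u^3*(ξm^2+2*u^2)) * hS2 + (- sq2 ξm u^5*(sq2 μ u^2 + μ^2 - u^2)) * hs2

end derivs

lemma pow_rpow_half (x : ℝ) (hx : 0 ≤ x) (n : ℕ) :
    Real.sqrt x ^ n = x ^ ((n : ℝ) / 2) := by
  rw [Real.sqrt_eq_rpow, ← Real.rpow_natCast (x ^ ((1:ℝ)/2)) n, ← Real.rpow_mul hx]
  norm_num [mul_comm, div_eq_mul_inv]

theorem zero_temp_g_third_deriv (ξm μ : ℝ) (hξ : 0 < ξm) (hμ0 : 0 < μ) (hμ : μ ≤ ξm) :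
    ∀ u : ℝ, 0 < u →
      iteratedDeriv 3 (fun u : ℝ =>
          u * (Real.sqrt (ξm ^ 2 + u ^ 2) - Real.sqrt (μ ^ 2 + u ^ 2)
            + μ * Real.log ((μ + Real.sqrt (μ ^ 2 + u ^ 2)) / u))) u
        = 3 * ξm ^ 4 / (ξm ^ 2 + u ^ 2) ^ ((5 : ℝ) / 2)
          + μ ^ 4 / (u ^ 2 * (μ ^ 2 + u ^ 2) ^ ((3 : ℝ) / 2)) ∧
      0 < 3 * ξm ^ 4 / (ξm ^ 2 + u ^ 2) ^ ((5 : ℝ) / 2)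
          + μ ^ 4 / (u ^ 2 * (μ ^ 2 + u ^ 2) ^ ((3 : ℝ) / 2)) := by
  intro u hu
  have hd1 : ∀ v ∈ Set.Ioi (0:ℝ), deriv (g0 ξm μ) v = g1 ξm μ v :=
    fun v hv => (hasDerivAt_g0 ξm μ hξ hμ0 v hv).deriv
  have hd2 : ∀ v ∈ Set.Ioi (0:ℝ), deriv (deriv (g0 ξm μ)) v = g2 ξm μ v := by
    intro v hv
    have e1 : deriv (g0 ξm μ) =ᶠ[nhds v] g1 ξm μ :=
      Filter.eventually_of_mem (Ioi_mem_nhds hv) hd1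
    rw [e1.deriv_eq, (hasDerivAt_g1 ξm μ hξ hμ0 v hv).deriv]
  have hd3 : deriv (deriv (deriv (g0 ξm μ))) u = g3 ξm μ u := by
    have e2 : deriv (deriv (g0 ξm μ)) =ᶠ[nhds u] g2 ξm μ :=
      Filter.eventually_of_mem (Ioi_mem_nhds hu) hd2
    rw [e2.deriv_eq, (hasDerivAt_g2 ξm μ hξ hμ0 u hu).deriv]
  have hfun : (fun u : ℝ =>
          u * (Real.sqrt (ξm ^ 2 + u ^ 2) - Real.sqrt (μ ^ 2 + u ^ 2)
            + μ * Real.log ((μ + Real.sqrt (μ ^ 2 + u ^ 2)) / u))) = g0 ξm μ := rfl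
  have hpos : (0:ℝ) < 3 * ξm ^ 4 / (ξm ^ 2 + u ^ 2) ^ ((5 : ℝ) / 2)
          + μ ^ 4 / (u ^ 2 * (μ ^ 2 + u ^ 2) ^ ((3 : ℝ) / 2)) := by positivity
  refine ⟨?_, hpos⟩
  rw [hfun, iteratedDeriv_succ, iteratedDeriv_succ, iteratedDeriv_succ, iteratedDeriv_zero, hd3]
  unfold g3 sq2
  rw [pow_rpow_half _ (by positivity) 5, pow_rpow_half _ (by positivity) 3]
  norm_num
end

section
/- Let ξ_m > 0, λ > 0, μ ∈ (0, ξ_m], and define F(u) = (λ/ξ_m)·u·(sqrt(ξ_m² + u²) − sqrt(μ² + u²) + μ·log((μ + sqrt(μ² + u²))/u)) for u > 0. Then for any initial value u₀ > 0, the sequence u_{n+1} = F(u_n) is monotone (nondecreasing if u₀ ≤ F(u₀), nonincreasing if u₀ ≥ F(u₀)) and converges to the unique positive fixed point of F, which is the unique positive solution of the zero-temperature gap equation. -/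
open Filter Topology Set

lemma aux_sinh_le {y : ℝ} (hy : 0 ≤ y) : Real.sinh y ≤ y * Real.cosh y := by
  have key : MonotoneOn (fun y : ℝ => y * Real.cosh y - Real.sinh y) (Ici 0) := by
    apply monotoneOn_of_hasDerivWithinAt_nonneg (f' := fun y => y * Real.sinh y)
      (convex_Ici 0)
    · exact (Continuous.continuousOn (by continuity))
    · intro x hx
      have h : HasDerivAt (fun y : ℝ => y * Real.cosh y - Real.sinh y) (x * Real.sinh x) x := by
        have : HasDerivAt (fun y : ℝ => y * Real.cosh y - Real.sinh y) _ x := ((hasDerivAt_id x).mul (Real.hasDerivAt_cosh x)).sub (Real.hasDerivAt_sinh x)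
        convert this using 1
        simp [id_eq, mul_comm]
      exact h.hasDerivWithinAt
    · intro x hx
      rw [interior_Ici] at hx
      exact mul_nonneg (le_of_lt hx) (Real.sinh_nonneg_iff.2 (le_of_lt hx))
  have h0 := key (self_mem_Ici) (mem_Ici.2 hy) hy
  simpa using h0

lemma aux_arsinh_ge {x : ℝ} (hx : 0 ≤ x) :
    x / Real.sqrt (1 + x ^ 2) ≤ Real.arsinh x := by
  have hy : 0 ≤ Real.arsinh x := Real.arsinh_nonneg_iff.2 hx
  have h := aux_sinh_le hy
  rw [Real.sinh_arsinh, Real.cosh_arsinh] at h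
  have hpos : 0 < Real.sqrt (1 + x ^ 2) := by positivity
  rw [div_le_iff₀ hpos]
  linarith [h]

lemma aux_arsinh_le {x : ℝ} (hx : 0 ≤ x) : Real.arsinh x ≤ x := by
  have hy : 0 ≤ Real.arsinh x := Real.arsinh_nonneg_iff.2 hx
  rcases eq_or_lt_of_le hy with h | h
  · rw [← h]; rw [eq_comm, Real.arsinh_eq_zero_iff] at h; rw [h]
  · have := (Real.self_lt_sinh_iff.2 h).le
    rwa [Real.sinh_arsinh] at this

lemma aux_log_eq {μ u : ℝ} (hμ : 0 < μ) (hu : 0 < u) :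
    Real.log ((μ + Real.sqrt (μ ^ 2 + u ^ 2)) / u) = Real.arsinh (μ / u) := by
  rw [Real.arsinh]
  congr 1
  have h1 : 1 + (μ / u) ^ 2 = (μ ^ 2 + u ^ 2) / u ^ 2 := by field_simp; ring
  rw [h1, Real.sqrt_div' _ (by positivity), Real.sqrt_sq hu.le]
  ring

lemma aux_sqrt_quot {μ u : ℝ} (hu : 0 < u) :
    Real.sqrt (1 + (μ / u) ^ 2) = Real.sqrt (μ ^ 2 + u ^ 2) / u := by
  have h1 : 1 + (μ / u) ^ 2 = (μ ^ 2 + u ^ 2) / u ^ 2 := by field_simp; ring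
  rw [h1, Real.sqrt_div' _ (by positivity), Real.sqrt_sq hu.le]

noncomputable def gT (ξm μ u : ℝ) : ℝ :=
  Real.sqrt (ξm ^ 2 + u ^ 2) - Real.sqrt (μ ^ 2 + u ^ 2)
    + μ * Real.log ((μ + Real.sqrt (μ ^ 2 + u ^ 2)) / u)

lemma sqrtA_hasDerivAt (c : ℝ) {u : ℝ} (hu : 0 < u) :
    HasDerivAt (fun v : ℝ => Real.sqrt (c ^ 2 + v ^ 2)) (u / Real.sqrt (c ^ 2 + u ^ 2)) u := by
  have h1 : HasDerivAt (fun v : ℝ => c ^ 2 + v ^ 2) (2 * u) u := by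
    simpa [mul_comm] using (hasDerivAt_pow 2 u).const_add (c ^ 2)
  have h2 := h1.sqrt (by positivity)
  convert h2 using 1
  ring

lemma gT_hasDerivAt (ξm : ℝ) {μ u : ℝ} (hμ : 0 < μ) (hu : 0 < u) :
    HasDerivAt (gT ξm μ) (u / Real.sqrt (ξm ^ 2 + u ^ 2) - Real.sqrt (μ ^ 2 + u ^ 2) / u) u := by
  have hb : 0 < Real.sqrt (μ ^ 2 + u ^ 2) := Real.sqrt_pos.2 (by positivity)
  have ha : 0 < Real.sqrt (ξm ^ 2 + u ^ 2) := Real.sqrt_pos.2 (by positivity)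
  have hb2 : Real.sqrt (μ ^ 2 + u ^ 2) ^ 2 = μ ^ 2 + u ^ 2 := Real.sq_sqrt (by positivity)
  have hA := sqrtA_hasDerivAt ξm hu
  have hB := sqrtA_hasDerivAt μ hu
  have hlog1 : HasDerivAt (fun v : ℝ => Real.log (μ + Real.sqrt (μ ^ 2 + v ^ 2)))
      ((u / Real.sqrt (μ ^ 2 + u ^ 2)) / (μ + Real.sqrt (μ ^ 2 + u ^ 2))) u :=
    (hB.const_add μ).log (by positivity)
  have hlog2 : HasDerivAt Real.log u⁻¹ u := Real.hasDerivAt_log hu.ne'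
  have hD : HasDerivAt (fun v : ℝ => Real.sqrt (ξm ^ 2 + v ^ 2) - Real.sqrt (μ ^ 2 + v ^ 2)
      + μ * (Real.log (μ + Real.sqrt (μ ^ 2 + v ^ 2)) - Real.log v))
      (u / Real.sqrt (ξm ^ 2 + u ^ 2) - Real.sqrt (μ ^ 2 + u ^ 2) / u) u := by
    have : HasDerivAt (fun v : ℝ => Real.sqrt (ξm ^ 2 + v ^ 2) - Real.sqrt (μ ^ 2 + v ^ 2)
        + μ * (Real.log (μ + Real.sqrt (μ ^ 2 + v ^ 2)) - Real.log v)) _ u := (hA.sub hB).add (((hlog1.sub hlog2)).const_mul μ)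
    convert this using 1
    have hμb : (0:ℝ) < μ + Real.sqrt (μ ^ 2 + u ^ 2) := by positivity
    field_simp
    linear_combination (-(Real.sqrt (ξm^2+u^2) * Real.sqrt (μ^2+u^2))) * hb2
  apply hD.congr_of_eventuallyEq
  filter_upwards [isOpen_Ioi.mem_nhds (Set.mem_Ioi.2 hu)] with x hx
  unfold gT
  rw [Real.log_div (by positivity) (ne_of_gt hx)]

lemma gT_strictAnti {ξm μ : ℝ} (hμ : 0 < μ) (hμξ : μ ≤ ξm) :
    StrictAntiOn (gT ξm μ) (Set.Ioi 0) := by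
  apply strictAntiOn_of_hasDerivWithinAt_neg (f' := fun u =>
      u / Real.sqrt (ξm ^ 2 + u ^ 2) - Real.sqrt (μ ^ 2 + u ^ 2) / u) (convex_Ioi 0)
  · exact fun x hx => (gT_hasDerivAt ξm hμ hx).continuousAt.continuousWithinAt
  · intro x hx
    rw [interior_Ioi] at hx
    exact (gT_hasDerivAt ξm hμ hx).hasDerivWithinAt
  · intro x hx
    rw [interior_Ioi] at hx
    have hx : (0:ℝ) < x := hx
    have ha : 0 < Real.sqrt (ξm ^ 2 + x ^ 2) := Real.sqrt_pos.2 (by positivity)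
    have h1 : x / Real.sqrt (ξm ^ 2 + x ^ 2) < 1 := by
      rw [div_lt_one ha]
      nlinarith [Real.sq_sqrt (show (0:ℝ) ≤ ξm ^ 2 + x ^ 2 by positivity), ha, hμ, hμξ]
    have h2 : 1 ≤ Real.sqrt (μ ^ 2 + x ^ 2) / x := by
      rw [le_div_iff₀ hx, one_mul]
      calc x = Real.sqrt (x ^ 2) := (Real.sqrt_sq hx.le).symm
        _ ≤ _ := Real.sqrt_le_sqrt (by nlinarith)
    linarith

lemma gT_pos {ξm μ : ℝ} (hμ : 0 < μ) (hμξ : μ ≤ ξm) {u : ℝ} (hu : 0 < u) :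
    0 < gT ξm μ u := by
  unfold gT
  have hab : Real.sqrt (μ ^ 2 + u ^ 2) ≤ Real.sqrt (ξm ^ 2 + u ^ 2) :=
    Real.sqrt_le_sqrt (by nlinarith)
  have hbu : u ≤ Real.sqrt (μ ^ 2 + u ^ 2) := by
    calc u = Real.sqrt (u ^ 2) := (Real.sqrt_sq hu.le).symm
      _ ≤ _ := Real.sqrt_le_sqrt (by nlinarith)
  have hlog : 0 < Real.log ((μ + Real.sqrt (μ ^ 2 + u ^ 2)) / u) := by
    apply Real.log_pos
    rw [lt_div_iff₀ hu, one_mul]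
    linarith
  nlinarith [mul_pos hμ hlog]

lemma hT_mono {ξm μ : ℝ} (hμ : 0 < μ) (hμξ : μ ≤ ξm) :
    MonotoneOn (fun u => u * gT ξm μ u) (Set.Ioi 0) := by
  apply monotoneOn_of_hasDerivWithinAt_nonneg (f' := fun u =>
      gT ξm μ u + (u / Real.sqrt (ξm ^ 2 + u ^ 2) - Real.sqrt (μ ^ 2 + u ^ 2) / u) * u)
      (convex_Ioi 0)
  · intro x hx
    exact (continuousAt_id.mul (gT_hasDerivAt ξm hμ hx).continuousAt).continuousWithinAt
  · intro x hx
    rw [interior_Ioi] at hx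
    have : HasDerivAt (fun u => u * gT ξm μ u) _ x := (hasDerivAt_id x).mul (gT_hasDerivAt ξm hμ hx)
    apply HasDerivAt.hasDerivWithinAt
    refine this.congr_deriv ?_
    simp [id_eq]; ring
  · intro x hx
    rw [interior_Ioi] at hx
    have hx : (0:ℝ) < x := hx
    set a := Real.sqrt (ξm ^ 2 + x ^ 2) with ha_def
    set b := Real.sqrt (μ ^ 2 + x ^ 2) with hb_def
    have ha : 0 < a := Real.sqrt_pos.2 (by positivity)
    have hb : 0 < b := Real.sqrt_pos.2 (by positivity)
    have ha2 : a ^ 2 = ξm ^ 2 + x ^ 2 := Real.sq_sqrt (by positivity)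
    have hb2 : b ^ 2 = μ ^ 2 + x ^ 2 := Real.sq_sqrt (by positivity)
    have hab : b ≤ a := Real.sqrt_le_sqrt (by nlinarith)
    have hxb : x ≤ b := by
      calc x = Real.sqrt (x ^ 2) := (Real.sqrt_sq hx.le).symm
        _ ≤ _ := Real.sqrt_le_sqrt (by nlinarith)
    have hxa : x ≤ a := le_trans hxb hab
    -- log bound
    have hlog : μ / b ≤ Real.log ((μ + b) / x) := by
      rw [hb_def, aux_log_eq hμ hx]
      have h1 := aux_arsinh_ge (x := μ / x) (by positivity)
      rw [aux_sqrt_quot hx] at h1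
      have h2 : μ / x / (Real.sqrt (μ ^ 2 + x ^ 2) / x) = μ / Real.sqrt (μ ^ 2 + x ^ 2) := by
        field_simp
      rwa [h2] at h1
    have hg : a - b + μ * (μ / b) ≤ gT ξm μ x := by
      unfold gT
      rw [← ha_def, ← hb_def]
      have := mul_le_mul_of_nonneg_left hlog hμ.le
      linarith
    have key : 0 ≤ (a - b) * (a * b - x ^ 2) :=
      mul_nonneg (by linarith) (by nlinarith)
    have hident : a - b + μ * (μ / b) + (x / a - b / x) * x
        = (a - b) * (a * b - x ^ 2) / (a * b) := by
      field_simp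
      linear_combination (-a) * hb2
    have : 0 ≤ a - b + μ * (μ / b) + (x / a - b / x) * x := by
      rw [hident]
      exact div_nonneg key (by positivity)
    linarith

lemma gT_upper {ξm μ : ℝ} (hμ : 0 < μ) (hμξ : μ ≤ ξm) {u : ℝ} (hu : 0 < u) :
    gT ξm μ u ≤ ξm ^ 2 / u := by
  unfold gT
  set a := Real.sqrt (ξm ^ 2 + u ^ 2) with ha_def
  set b := Real.sqrt (μ ^ 2 + u ^ 2) with hb_def
  have ha : 0 < a := Real.sqrt_pos.2 (by positivity)
  have hb : 0 < b := Real.sqrt_pos.2 (by positivity)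
  have ha2 : a ^ 2 = ξm ^ 2 + u ^ 2 := Real.sq_sqrt (by positivity)
  have hb2 : b ^ 2 = μ ^ 2 + u ^ 2 := Real.sq_sqrt (by positivity)
  have hab : b ≤ a := Real.sqrt_le_sqrt (by nlinarith)
  have hub : u ≤ b := by
    calc u = Real.sqrt (u ^ 2) := (Real.sqrt_sq hu.le).symm
      _ ≤ _ := Real.sqrt_le_sqrt (by nlinarith)
  have hua : u ≤ a := hub.trans hab
  have h1 : a - b ≤ (ξm ^ 2 - μ ^ 2) / u := by
    rw [le_div_iff₀ hu]
    nlinarith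
  have h2 : Real.log ((μ + b) / u) ≤ μ / u := by
    rw [hb_def, aux_log_eq hμ hu]
    exact aux_arsinh_le (by positivity)
  have h3 : μ * Real.log ((μ + b) / u) ≤ μ ^ 2 / u := by
    have h5 := mul_le_mul_of_nonneg_left h2 hμ.le
    have h6 : μ * (μ / u) = μ ^ 2 / u := by ring
    linarith
  have : (ξm ^ 2 - μ ^ 2) / u + μ ^ 2 / u = ξm ^ 2 / u := by ring
  linarith

lemma gT_exists_root {ξm lam μ : ℝ} (hξ : 0 < ξm) (hlam : 0 < lam) (hμ : 0 < μ)
    (hμξ : μ ≤ ξm) : ∃ L : ℝ, 0 < L ∧ gT ξm μ L = ξm / lam := by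
  set c := μ * Real.exp (-(ξm / (lam * μ))) with hc_def
  have hc : 0 < c := by positivity
  set d := max (lam * ξm) c with hd_def
  have hd : 0 < d := lt_of_lt_of_le hc (le_max_right _ _)
  have hcd : c ≤ d := le_max_right _ _
  have hgc : ξm / lam ≤ gT ξm μ c := by
    unfold gT
    have hab : Real.sqrt (μ ^ 2 + c ^ 2) ≤ Real.sqrt (ξm ^ 2 + c ^ 2) :=
      Real.sqrt_le_sqrt (by nlinarith)
    have hb : 0 < Real.sqrt (μ ^ 2 + c ^ 2) := Real.sqrt_pos.2 (by positivity)
    have hμc : μ / c = Real.exp (ξm / (lam * μ)) := by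
      rw [hc_def, Real.exp_neg]
      field_simp
    have hlog : ξm / (lam * μ) ≤ Real.log ((μ + Real.sqrt (μ ^ 2 + c ^ 2)) / c) := by
      have h1 : μ / c ≤ (μ + Real.sqrt (μ ^ 2 + c ^ 2)) / c :=
        div_le_div_of_nonneg_right (by linarith [hb]) hc.le
      have h2 := Real.log_le_log (by positivity) h1
      rwa [hμc, Real.log_exp] at h2
    have h3 := mul_le_mul_of_nonneg_left hlog hμ.le
    have h4 : μ * (ξm / (lam * μ)) = ξm / lam := by field_simp
    linarith
  have hgd : gT ξm μ d ≤ ξm / lam := by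
    have h1 := gT_upper hμ hμξ hd
    have h2 : ξm ^ 2 / d ≤ ξm ^ 2 / (lam * ξm) :=
      div_le_div_of_nonneg_left (by positivity) (by positivity) (le_max_left _ _)
    have h3 : ξm ^ 2 / (lam * ξm) = ξm / lam := by
      field_simp
    linarith
  have hcont : ContinuousOn (gT ξm μ) (Set.Icc c d) := fun x hx =>
    (gT_hasDerivAt ξm hμ (lt_of_lt_of_le hc hx.1)).continuousAt.continuousWithinAt
  obtain ⟨L, hLmem, hgL⟩ := intermediate_value_Icc' hcd hcont ⟨hgd, hgc⟩
  exact ⟨L, lt_of_lt_of_le hc hLmem.1, hgL⟩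

theorem zero_temp_iteration_converges (ξm lam μ : ℝ) (hξ : 0 < ξm) (hlam : 0 < lam)
    (hμ0 : 0 < μ) (hμ : μ ≤ ξm)
    (F : ℝ → ℝ)
    (hF : ∀ u : ℝ, F u = lam / ξm * u *
      (Real.sqrt (ξm ^ 2 + u ^ 2) - Real.sqrt (μ ^ 2 + u ^ 2)
        + μ * Real.log ((μ + Real.sqrt (μ ^ 2 + u ^ 2)) / u)))
    (u : ℕ → ℝ) (hu0 : 0 < u 0) (hrec : ∀ n, u (n + 1) = F (u n)) :
    (u 0 ≤ F (u 0) → Monotone u) ∧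
    (F (u 0) ≤ u 0 → Antitone u) ∧
    ∃ L : ℝ, 0 < L ∧ Tendsto u atTop (𝓝 L) ∧ F L = L ∧
      (ξm / lam = Real.sqrt (ξm ^ 2 + L ^ 2) - Real.sqrt (μ ^ 2 + L ^ 2)
        + μ * Real.log ((μ + Real.sqrt (μ ^ 2 + L ^ 2)) / L)) ∧
      (∀ Δ : ℝ, 0 < Δ →
        ξm / lam = Real.sqrt (ξm ^ 2 + Δ ^ 2) - Real.sqrt (μ ^ 2 + Δ ^ 2)
          + μ * Real.log ((μ + Real.sqrt (μ ^ 2 + Δ ^ 2)) / Δ) → Δ = L) := by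
  have hFg : ∀ v : ℝ, F v = lam / ξm * v * gT ξm μ v := fun v => hF v
  obtain ⟨Ls, hLs, hgLs⟩ := gT_exists_root hξ hlam hμ0 hμ
  have hFfix : F Ls = Ls := by
    rw [hFg Ls, hgLs]
    field_simp
  have hFpos : ∀ v : ℝ, 0 < v → 0 < F v := by
    intro v hv
    rw [hFg v]
    exact mul_pos (mul_pos (div_pos hlam hξ) hv) (gT_pos hμ0 hμ hv)
  have hFmono : ∀ x y : ℝ, 0 < x → x ≤ y → F x ≤ F y := by
    intro x y hx hxy
    rw [hFg x, hFg y]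
    have hy : 0 < y := lt_of_lt_of_le hx hxy
    have h1 : x * gT ξm μ x ≤ y * gT ξm μ y :=
      hT_mono hμ0 hμ (Set.mem_Ioi.2 hx) (Set.mem_Ioi.2 hy) hxy
    have h2 := mul_le_mul_of_nonneg_left h1 (le_of_lt (div_pos hlam hξ))
    calc lam / ξm * x * gT ξm μ x = lam / ξm * (x * gT ξm μ x) := by ring
      _ ≤ lam / ξm * (y * gT ξm μ y) := h2
      _ = lam / ξm * y * gT ξm μ y := by ring
  have hgap : ∀ v : ℝ, 0 < v → v ≤ F v → ξm / lam ≤ gT ξm μ v := by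
    intro v hv hvF
    rw [hFg v] at hvF
    have h1 : v * 1 ≤ v * (lam / ξm * gT ξm μ v) := by
      calc v * 1 = v := by ring
        _ ≤ lam / ξm * v * gT ξm μ v := hvF
        _ = v * (lam / ξm * gT ξm μ v) := by ring
    have h2 : (1:ℝ) ≤ lam / ξm * gT ξm μ v := le_of_mul_le_mul_left h1 hv
    have h3 := mul_le_mul_of_nonneg_left h2 hξ.le
    rw [div_le_iff₀ hlam]
    have h4 : ξm * (lam / ξm * gT ξm μ v) = lam * gT ξm μ v := by field_simp
    nlinarith [h3, h4]
  have hgap' : ∀ v : ℝ, 0 < v → F v ≤ v → gT ξm μ v ≤ ξm / lam := by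
    intro v hv hvF
    rw [hFg v] at hvF
    have h1 : v * (lam / ξm * gT ξm μ v) ≤ v * 1 := by
      calc v * (lam / ξm * gT ξm μ v) = lam / ξm * v * gT ξm μ v := by ring
        _ ≤ v := hvF
        _ = v * 1 := by ring
    have h2 : lam / ξm * gT ξm μ v ≤ (1:ℝ) := le_of_mul_le_mul_left h1 hv
    have h3 := mul_le_mul_of_nonneg_left h2 hξ.le
    rw [le_div_iff₀ hlam]
    have h4 : ξm * (lam / ξm * gT ξm μ v) = lam * gT ξm μ v := by field_simp
    nlinarith [h3, h4]
  have hle_Ls : ∀ v : ℝ, 0 < v → v ≤ F v → v ≤ Ls := by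
    intro v hv hvF
    by_contra h
    push_neg at h
    have := gT_strictAnti hμ0 hμ (Set.mem_Ioi.2 hLs) (Set.mem_Ioi.2 hv) h
    have h2 := hgap v hv hvF
    rw [hgLs] at this
    linarith
  have hge_Ls : ∀ v : ℝ, 0 < v → F v ≤ v → Ls ≤ v := by
    intro v hv hvF
    by_contra h
    push_neg at h
    have := gT_strictAnti hμ0 hμ (Set.mem_Ioi.2 hv) (Set.mem_Ioi.2 hLs) h
    have h2 := hgap' v hv hvF
    rw [hgLs] at this
    linarith
  have hupos : ∀ n, 0 < u n := by
    intro n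
    induction n with
    | zero => exact hu0
    | succ n ih => rw [hrec n]; exact hFpos _ ih
  have hMono : u 0 ≤ F (u 0) → Monotone u := by
    intro h0
    apply monotone_nat_of_le_succ
    intro n
    induction n with
    | zero => rw [hrec 0]; exact h0
    | succ n ih =>
      have := hFmono (u n) (u (n + 1)) (hupos n) ih
      rw [← hrec n, ← hrec (n + 1)] at this
      exact this
  have hAnti : F (u 0) ≤ u 0 → Antitone u := by
    intro h0
    apply antitone_nat_of_succ_le
    intro n
    induction n with
    | zero => rw [hrec 0]; exact h0
    | succ n ih =>
      have := hFmono (u (n + 1)) (u n) (hupos (n + 1)) ih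
      rw [← hrec n, ← hrec (n + 1)] at this
      exact this
  refine ⟨hMono, hAnti, ?_⟩
  have final : ∀ L : ℝ, 0 < L → Tendsto u atTop (𝓝 L) →
      ∃ L : ℝ, 0 < L ∧ Tendsto u atTop (𝓝 L) ∧ F L = L ∧
      (ξm / lam = Real.sqrt (ξm ^ 2 + L ^ 2) - Real.sqrt (μ ^ 2 + L ^ 2)
        + μ * Real.log ((μ + Real.sqrt (μ ^ 2 + L ^ 2)) / L)) ∧
      (∀ Δ : ℝ, 0 < Δ →
        ξm / lam = Real.sqrt (ξm ^ 2 + Δ ^ 2) - Real.sqrt (μ ^ 2 + Δ ^ 2)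
          + μ * Real.log ((μ + Real.sqrt (μ ^ 2 + Δ ^ 2)) / Δ) → Δ = L) := by
    intro L hL0 htend
    have hcont : ContinuousAt F L := by
      have hFeq : F = fun v => lam / ξm * v * gT ξm μ v := funext hFg
      rw [hFeq]
      exact (continuousAt_const.mul continuousAt_id).mul
        (gT_hasDerivAt ξm hμ0 hL0).continuousAt
    have h1 : Tendsto (fun n => u (n + 1)) atTop (𝓝 L) :=
      htend.comp (tendsto_add_atTop_nat 1)
    have h2 : Tendsto (fun n => F (u n)) atTop (𝓝 (F L)) := hcont.tendsto.comp htend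
    have heq : (fun n => u (n + 1)) = fun n => F (u n) := funext hrec
    have hFL : F L = L := tendsto_nhds_unique h2 (heq ▸ h1)
    have hgL : gT ξm μ L = ξm / lam := by
      have hFL' := hFL
      rw [hFg L] at hFL'
      have h3 : lam * L * gT ξm μ L = L * ξm := by
        field_simp at hFL'
        linear_combination L * hFL'
      have h4 : L * (lam * gT ξm μ L) = L * ξm := by linarith [h3]
      have h5 : lam * gT ξm μ L = ξm := mul_left_cancel₀ hL0.ne' (by linarith [h4])
      rw [eq_div_iff hlam.ne']
      linarith [h5]
    refine ⟨L, hL0, htend, hFL, ?_, ?_⟩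
    · show ξm / lam = gT ξm μ L
      exact hgL.symm
    · intro Δ hΔ hΔeq
      have hgΔ : gT ξm μ Δ = ξm / lam := (show ξm / lam = gT ξm μ Δ from hΔeq).symm
      exact (gT_strictAnti hμ0 hμ).injOn (Set.mem_Ioi.2 hΔ) (Set.mem_Ioi.2 hL0)
        (hgΔ.trans hgL.symm)
  rcases le_total (u 0) (F (u 0)) with hc | hc
  · have hub : ∀ n, u n ≤ Ls := by
      intro n
      induction n with
      | zero => exact hle_Ls _ hu0 hc
      | succ n ih =>
        rw [hrec n]
        calc F (u n) ≤ F Ls := hFmono _ _ (hupos n) ih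
          _ = Ls := hFfix
    have hbdd : BddAbove (Set.range u) := ⟨Ls, by rintro x ⟨n, rfl⟩; exact hub n⟩
    have htend : Tendsto u atTop (𝓝 (⨆ n, u n)) := tendsto_atTop_ciSup (hMono hc) hbdd
    exact final _ (lt_of_lt_of_le hu0 (le_ciSup hbdd 0)) htend
  · have hlb : ∀ n, Ls ≤ u n := by
      intro n
      induction n with
      | zero => exact hge_Ls _ hu0 hc
      | succ n ih =>
        rw [hrec n]
        calc Ls = F Ls := hFfix.symm
          _ ≤ F (u n) := hFmono _ _ hLs ih
    have hbdd : BddBelow (Set.range u) := ⟨Ls, by rintro x ⟨n, rfl⟩; exact hlb n⟩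
    have htend : Tendsto u atTop (𝓝 (⨅ n, u n)) := tendsto_atTop_ciInf (hAnti hc) hbdd
    exact final _ (lt_of_lt_of_le hLs (le_ciInf hlb)) htend
end

section
/- For T > 0, ξ_m > 0, μ ∈ (0, ξ_m], the finite-temperature function f(Δ) = 2T·log(cosh(sqrt(ξ_m² + Δ²)/(2T))/cosh(sqrt(μ² + Δ²)/(2T))) + μ·∫₀^μ tanh(sqrt(ξ² + Δ²)/(2T))/sqrt(ξ² + Δ²) dξ is strictly decreasing in Δ on (0, ∞). -/
open Real Set

private lemma tanh_eq_fun : Real.tanh = fun x => Real.sinh x / Real.cosh x :=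
  funext fun x => Real.tanh_eq_sinh_div_cosh x

private lemma continuous_tanh' : Continuous Real.tanh := by
  rw [tanh_eq_fun]
  exact Real.continuous_sinh.div Real.continuous_cosh fun x => (Real.cosh_pos x).ne'

private lemma hasDerivAt_tanh' (x : ℝ) :
    HasDerivAt Real.tanh (1 / Real.cosh x ^ 2) x := by
  rw [tanh_eq_fun]
  have h := (Real.hasDerivAt_sinh x).div (Real.hasDerivAt_cosh x) (Real.cosh_pos x).ne'
  refine h.congr_deriv ?_
  have := Real.cosh_sq_sub_sinh_sq x
  field_simp
  nlinarith [this]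

private lemma tanh_div_strictAnti :
    StrictAntiOn (fun x => Real.tanh x / x) (Set.Ioi (0 : ℝ)) := by
  apply strictAntiOn_of_deriv_neg (convex_Ioi 0)
  · exact (continuous_tanh'.continuousOn).div continuousOn_id fun x hx => ne_of_gt hx
  · intro x hx
    rw [interior_Ioi] at hx
    have hx : (0:ℝ) < x := hx
    have hd : HasDerivAt (fun x => Real.tanh x / x)
        ((1 / Real.cosh x ^ 2 * x - Real.tanh x * 1) / x ^ 2) x :=
      (hasDerivAt_tanh' x).div (hasDerivAt_id x) hx.ne'
    rw [hd.deriv]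
    apply div_neg_of_neg_of_pos _ (by positivity)
    rw [Real.tanh_eq_sinh_div_cosh]
    have hc : 0 < Real.cosh x := Real.cosh_pos x
    have hs : x < Real.sinh x := Real.self_lt_sinh_iff.mpr hx
    have h1 : (1:ℝ) ≤ Real.cosh x := Real.one_le_cosh x
    rw [sub_neg, div_mul_eq_mul_div, one_mul, mul_one, div_lt_div_iff₀ (by positivity) hc]
    have hsp : 0 < Real.sinh x := Real.sinh_pos_iff.mpr hx
    have h2 : x * Real.cosh x < Real.sinh x * Real.cosh x := mul_lt_mul_of_pos_right hs hc
    nlinarith [mul_pos hsp hc]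

/-- Strict comparison: for `0 < a < b`, `tanh (b/(2T))/b < tanh (a/(2T))/a`. -/
private lemma key_lt (T : ℝ) (hT : 0 < T) {a b : ℝ} (ha : 0 < a) (hab : a < b) :
    Real.tanh (b / (2 * T)) / b < Real.tanh (a / (2 * T)) / a := by
  have h2T : (0:ℝ) < 2 * T := by linarith
  have hb0 : 0 < b := ha.trans hab
  have ha' : a / (2 * T) ∈ Set.Ioi (0:ℝ) := div_pos ha h2T
  have hb' : b / (2 * T) ∈ Set.Ioi (0:ℝ) := div_pos hb0 h2T
  have hlt : a / (2 * T) < b / (2 * T) := by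
    exact div_lt_div_of_pos_right hab h2T
  have h : Real.tanh (b / (2 * T)) / (b / (2 * T))
      < Real.tanh (a / (2 * T)) / (a / (2 * T)) := tanh_div_strictAnti ha' hb' hlt
  have e : ∀ c : ℝ, 0 < c →
      Real.tanh (c / (2 * T)) / (c / (2 * T)) = (2 * T) * (Real.tanh (c / (2 * T)) / c) := by
    intro c hc; field_simp
  rw [e a ha, e b hb0] at h
  exact lt_of_mul_lt_mul_left h h2T.le


/-- Weak version of the key comparison. -/
private lemma key_le (T : ℝ) (hT : 0 < T) {a b : ℝ} (ha : 0 < a) (hab : a ≤ b) :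
    Real.tanh (b / (2 * T)) / b ≤ Real.tanh (a / (2 * T)) / a := by
  rcases eq_or_lt_of_le hab with rfl | h
  · exact le_refl _
  · exact (key_lt T hT ha h).le

/-- Derivative of the log-cosh term. -/
private lemma hasDerivAt_logcosh (T x : ℝ) (hT : 0 < T) (hx : 0 < x) (Δ : ℝ) :
    HasDerivAt (fun Δ : ℝ => 2 * T * Real.log (Real.cosh (Real.sqrt (x ^ 2 + Δ ^ 2) / (2 * T))))
      (Δ * (Real.tanh (Real.sqrt (x ^ 2 + Δ ^ 2) / (2 * T)) / Real.sqrt (x ^ 2 + Δ ^ 2))) Δ := by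
  have hpos : 0 < x ^ 2 + Δ ^ 2 := by positivity
  have hs : 0 < Real.sqrt (x ^ 2 + Δ ^ 2) := Real.sqrt_pos.mpr hpos
  have h2T : (0:ℝ) < 2 * T := by linarith
  have h1 : HasDerivAt (fun Δ : ℝ => x ^ 2 + Δ ^ 2) (2 * Δ) Δ := by
    simpa using ((hasDerivAt_pow 2 Δ).const_add (x ^ 2))
  have h2 : HasDerivAt (fun Δ : ℝ => Real.sqrt (x ^ 2 + Δ ^ 2))
      (1 / (2 * Real.sqrt (x ^ 2 + Δ ^ 2)) * (2 * Δ)) Δ :=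
    (Real.hasDerivAt_sqrt hpos.ne').comp Δ h1
  have h3 := h2.div_const (2 * T)
  have h4 : HasDerivAt (fun Δ : ℝ => Real.cosh (Real.sqrt (x ^ 2 + Δ ^ 2) / (2 * T)))
      (Real.sinh (Real.sqrt (x ^ 2 + Δ ^ 2) / (2 * T))
        * (1 / (2 * Real.sqrt (x ^ 2 + Δ ^ 2)) * (2 * Δ) / (2 * T))) Δ :=
    (Real.hasDerivAt_cosh _).comp Δ h3
  have hc : Real.cosh (Real.sqrt (x ^ 2 + Δ ^ 2) / (2 * T)) ≠ 0 := (Real.cosh_pos _).ne'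
  have h5 := ((Real.hasDerivAt_log hc).comp Δ h4).const_mul (2 * T)
  refine h5.congr_deriv ?_
  rw [Real.tanh_eq_sinh_div_cosh]
  field_simp

theorem finite_temp_rhs_strictAnti_in_gap (T ξm μ : ℝ) (hT : 0 < T) (hξ : 0 < ξm)
    (hμ0 : 0 < μ) (hμ : μ ≤ ξm) :
    StrictAntiOn (fun Δ : ℝ =>
      2 * T * Real.log (Real.cosh (Real.sqrt (ξm ^ 2 + Δ ^ 2) / (2 * T))
          / Real.cosh (Real.sqrt (μ ^ 2 + Δ ^ 2) / (2 * T)))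
        + μ * ∫ ξ in (0 : ℝ)..μ,
            Real.tanh (Real.sqrt (ξ ^ 2 + Δ ^ 2) / (2 * T)) / Real.sqrt (ξ ^ 2 + Δ ^ 2))
      (Set.Ioi 0) := by
  intro Δ1 h1 Δ2 h2 h12
  have h1' : (0:ℝ) < Δ1 := h1
  have h2' : (0:ℝ) < Δ2 := h2
  simp only
  have hc1 : ∀ Δ : ℝ, Real.cosh (Real.sqrt (ξm ^ 2 + Δ ^ 2) / (2 * T)) ≠ 0 :=
    fun Δ => (Real.cosh_pos _).ne'
  have hc2 : ∀ Δ : ℝ, Real.cosh (Real.sqrt (μ ^ 2 + Δ ^ 2) / (2 * T)) ≠ 0 :=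
    fun Δ => (Real.cosh_pos _).ne'
  rw [Real.log_div (hc1 Δ1) (hc2 Δ1), Real.log_div (hc1 Δ2) (hc2 Δ2)]
  -- F part: antitone
  set F : ℝ → ℝ := fun Δ =>
    2 * T * Real.log (Real.cosh (Real.sqrt (ξm ^ 2 + Δ ^ 2) / (2 * T)))
      - 2 * T * Real.log (Real.cosh (Real.sqrt (μ ^ 2 + Δ ^ 2) / (2 * T))) with hF
  have hFanti : AntitoneOn F (Set.Ioi (0:ℝ)) := by
    apply antitoneOn_of_deriv_nonpos (convex_Ioi 0)
    · intro Δ _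
      exact (((hasDerivAt_logcosh T ξm hT hξ Δ).sub
        (hasDerivAt_logcosh T μ hT hμ0 Δ)).differentiableAt).continuousAt.continuousWithinAt
    · intro Δ hΔ
      rw [interior_Ioi] at hΔ
      exact (((hasDerivAt_logcosh T ξm hT hξ Δ).sub
        (hasDerivAt_logcosh T μ hT hμ0 Δ)).differentiableAt).differentiableWithinAt
    · intro Δ hΔ
      rw [interior_Ioi] at hΔ
      have hΔ0 : (0:ℝ) < Δ := hΔ
      have hd := (hasDerivAt_logcosh T ξm hT hξ Δ).sub (hasDerivAt_logcosh T μ hT hμ0 Δ)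
      rw [show deriv F Δ = _ from hd.deriv]
      have hsA : 0 < Real.sqrt (μ ^ 2 + Δ ^ 2) := Real.sqrt_pos.mpr (by positivity)
      have hle : Real.sqrt (μ ^ 2 + Δ ^ 2) ≤ Real.sqrt (ξm ^ 2 + Δ ^ 2) := by
        apply Real.sqrt_le_sqrt
        nlinarith
      have := key_le T hT hsA hle
      have hΔnn : (0:ℝ) ≤ Δ := hΔ0.le
      nlinarith [this, hΔnn]
  -- G part: strictly decreasing integral
  have hGlt : (∫ ξ in (0:ℝ)..μ,
        Real.tanh (Real.sqrt (ξ ^ 2 + Δ2 ^ 2) / (2 * T)) / Real.sqrt (ξ ^ 2 + Δ2 ^ 2))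
      < ∫ ξ in (0:ℝ)..μ,
        Real.tanh (Real.sqrt (ξ ^ 2 + Δ1 ^ 2) / (2 * T)) / Real.sqrt (ξ ^ 2 + Δ1 ^ 2) := by
    have cont : ∀ Δ : ℝ, 0 < Δ → ContinuousOn
        (fun ξ : ℝ => Real.tanh (Real.sqrt (ξ ^ 2 + Δ ^ 2) / (2 * T)) / Real.sqrt (ξ ^ 2 + Δ ^ 2))
        (Set.Icc 0 μ) := by
      intro Δ hΔ
      have hcont : Continuous fun ξ : ℝ => Real.sqrt (ξ ^ 2 + Δ ^ 2) :=
        ((continuous_pow 2).add continuous_const).sqrt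
      exact ((continuous_tanh'.comp (hcont.div_const (2 * T))).continuousOn).div
        hcont.continuousOn
        (fun ξ _ => (Real.sqrt_pos.mpr (by positivity)).ne')
    have hptwise : ∀ ξ : ℝ,
        Real.tanh (Real.sqrt (ξ ^ 2 + Δ2 ^ 2) / (2 * T)) / Real.sqrt (ξ ^ 2 + Δ2 ^ 2)
        < Real.tanh (Real.sqrt (ξ ^ 2 + Δ1 ^ 2) / (2 * T)) / Real.sqrt (ξ ^ 2 + Δ1 ^ 2) := by
      intro ξ
      have ha : 0 < Real.sqrt (ξ ^ 2 + Δ1 ^ 2) := Real.sqrt_pos.mpr (by positivity)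
      have hab : Real.sqrt (ξ ^ 2 + Δ1 ^ 2) < Real.sqrt (ξ ^ 2 + Δ2 ^ 2) := by
        apply Real.sqrt_lt_sqrt (by positivity)
        nlinarith
      exact key_lt T hT ha hab
    exact intervalIntegral.integral_lt_integral_of_continuousOn_of_le_of_exists_lt hμ0
      (cont Δ2 h2') (cont Δ1 h1')
      (fun ξ _ => (hptwise ξ).le) ⟨0, ⟨le_refl 0, hμ0.le⟩, hptwise 0⟩
  have hFle : F Δ2 ≤ F Δ1 := hFanti h1 h2 h12.le
  rw [hF] at hFle
  simp only at hFle
  have hμI := mul_lt_mul_of_pos_left hGlt hμ0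
  linarith
end

section
/- For fixed a ≥ 0 and b > a ≥ 0, the function T ↦ 2T·log(cosh(b/(2T))/cosh(a/(2T))) − (b·tanh(b/(2T)) − a·tanh(a/(2T))) is strictly negative for all T > 0. -/
open Real

lemma tanh_lt_tanh_of_lt {x y : ℝ} (h : x < y) : Real.tanh x < Real.tanh y := by
  rw [Real.tanh_eq_sinh_div_cosh, Real.tanh_eq_sinh_div_cosh,
    div_lt_div_iff₀ (Real.cosh_pos x) (Real.cosh_pos y)]
  have : Real.sinh (x - y) < 0 := by
    rw [← Real.sinh_zero, Real.sinh_lt_sinh]; linarith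
  rw [Real.sinh_sub] at this
  linarith

lemma key_s13 {x y : ℝ} (hx : 0 ≤ x) (hxy : x < y) :
    Real.log (Real.cosh y) - Real.log (Real.cosh x) < y * Real.tanh y - x * Real.tanh x := by
  have hderiv : ∀ t ∈ Set.Ioo x y,
      HasDerivAt (fun u => Real.log (Real.cosh u)) (Real.tanh t) t := by
    intro t _
    have h1 : HasDerivAt Real.cosh (Real.sinh t) t := Real.hasDerivAt_cosh t
    have h2 := h1.log (ne_of_gt (Real.cosh_pos t))
    rwa [← Real.tanh_eq_sinh_div_cosh] at h2
  have hcont : ContinuousOn (fun u => Real.log (Real.cosh u)) (Set.Icc x y) :=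
    (Real.continuous_cosh.log fun t => ne_of_gt (Real.cosh_pos t)).continuousOn
  obtain ⟨c, hc, hceq⟩ := exists_hasDerivAt_eq_slope (fun u => Real.log (Real.cosh u))
    (fun u => Real.tanh u) hxy hcont (fun t ht => hderiv t ht)
  have hslope : Real.log (Real.cosh y) - Real.log (Real.cosh x) = (y - x) * Real.tanh c := by
    have hne : y - x ≠ 0 := by linarith
    exact (div_eq_iff hne).mp hceq.symm |>.trans (by ring)
  rw [hslope]
  rw [mul_comm] at hslope
  have h1 : Real.tanh c < Real.tanh y := tanh_lt_tanh_of_lt hc.2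
  have h2 : Real.tanh x ≤ Real.tanh y := le_of_lt (tanh_lt_tanh_of_lt hxy)
  nlinarith [mul_le_mul_of_nonneg_left h2 hx]

theorem q_negative (a b : ℝ) (ha : 0 ≤ a) (hab : a < b) :
    ∀ T : ℝ, 0 < T →
      2 * T * Real.log (Real.cosh (b / (2 * T)) / Real.cosh (a / (2 * T)))
        - (b * Real.tanh (b / (2 * T)) - a * Real.tanh (a / (2 * T))) < 0 := by
  intro T hT
  set s := 2 * T with hs
  have hspos : 0 < s := by positivity
  set x := a / s with hx
  set y := b / s with hy
  have hx0 : 0 ≤ x := div_nonneg ha hspos.le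
  have hxy : x < y := by rw [hx, hy]; gcongr
  have hkey := key_s13 hx0 hxy
  have hlog : Real.log (Real.cosh y / Real.cosh x)
      = Real.log (Real.cosh y) - Real.log (Real.cosh x) :=
    Real.log_div (ne_of_gt (Real.cosh_pos y)) (ne_of_gt (Real.cosh_pos x))
  have hb : b = s * y := by rw [hy]; field_simp
  have haa : a = s * x := by rw [hx]; field_simp
  rw [hlog, hb, haa]
  nlinarith [mul_lt_mul_of_pos_left hkey hspos]
end

section
/- For ξ_m > 0, λ > 0, T > 0, and μ = 0, the finite-temperature gap equation cosh(sqrt(ξ_m² + Δ²)/(2T))/cosh(Δ/(2T)) = exp(ξ_m/(2λT)) has a positive solution Δ > 0 if and only if exp(ξ_m/(2λT)) < cosh(ξ_m/(2T)). -/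
private lemma hasDerivAt_cosh_mul (c t : ℝ) :
    HasDerivAt (fun t => Real.cosh (c * t)) (c * Real.sinh (c * t)) t := by
  have h := (Real.hasDerivAt_cosh (c * t)).comp t ((hasDerivAt_id t).const_mul c)
  simpa [Function.comp_def, mul_comm] using h
private lemma hasDerivAt_sinh_mul (c t : ℝ) :
    HasDerivAt (fun t => Real.sinh (c * t)) (c * Real.cosh (c * t)) t := by
  have h := (Real.hasDerivAt_sinh (c * t)).comp t ((hasDerivAt_id t).const_mul c)
  simpa [Function.comp_def, mul_comm] using h

private lemma cosh_sqrt_lt (a b : ℝ) (ha : 0 < a) (hb : 0 < b) :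
    Real.cosh (Real.sqrt (a ^ 2 + b ^ 2)) < Real.cosh a * Real.cosh b := by
  set r := Real.sqrt (a ^ 2 + b ^ 2) with hrdef
  have hr2 : r ^ 2 = a ^ 2 + b ^ 2 := Real.sq_sqrt (by positivity)
  have hrpos : 0 < r := Real.sqrt_pos.mpr (by positivity)
  set φ : ℝ → ℝ := fun t =>
    a * Real.sinh (a*t) * Real.cosh (b*t) + b * Real.cosh (a*t) * Real.sinh (b*t)
      - r * Real.sinh (r*t) - r * (Real.cosh (a*t) * Real.cosh (b*t) - Real.cosh (r*t))
    with hφdef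
  have hφderiv : ∀ t, HasDerivAt φ
      (a * (a * Real.cosh (a*t)) * Real.cosh (b*t) + a * Real.sinh (a*t) * (b * Real.sinh (b*t))
        + (b * (a * Real.sinh (a*t)) * Real.sinh (b*t) + b * Real.cosh (a*t) * (b * Real.cosh (b*t)))
        - r * (r * Real.cosh (r*t))
        - r * ((a * Real.sinh (a*t)) * Real.cosh (b*t) + Real.cosh (a*t) * (b * Real.sinh (b*t))
              - r * Real.sinh (r*t))) t := by
    intro t
    have h1 := (((hasDerivAt_sinh_mul a t).const_mul a).mul (hasDerivAt_cosh_mul b t))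
    have h2 := (((hasDerivAt_cosh_mul a t).const_mul b).mul (hasDerivAt_sinh_mul b t))
    have h3 := (hasDerivAt_sinh_mul r t).const_mul r
    have h4 := (((hasDerivAt_cosh_mul a t).mul (hasDerivAt_cosh_mul b t)).sub (hasDerivAt_cosh_mul r t)).const_mul r
    exact ((h1.add h2).sub h3).sub h4
  have huderiv : ∀ t, HasDerivAt (fun t => Real.exp (r*t) * φ t)
      (Real.exp (r*t) * (2*a*b*Real.sinh (a*t)*Real.sinh (b*t))) t := by
    intro t
    have he : HasDerivAt (fun t => Real.exp (r*t)) (r * Real.exp (r*t)) t := by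
      have h := (Real.hasDerivAt_exp (r*t)).comp t ((hasDerivAt_id t).const_mul r)
      simpa [Function.comp_def, mul_comm] using h
    have := he.mul (hφderiv t)
    refine this.congr_deriv ?_
    symm
    simp only [hφdef]
    linear_combination (Real.exp (r*t) * Real.cosh (a*t) * Real.cosh (b*t)) * hr2
  -- u is strictly increasing on [0,1]
  have husm : StrictMonoOn (fun t => Real.exp (r*t) * φ t) (Set.Icc (0:ℝ) 1) := by
    apply strictMonoOn_of_deriv_pos (convex_Icc 0 1)
      (fun t _ => ((huderiv t).differentiableAt.continuousAt).continuousWithinAt)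
    intro t ht
    rw [interior_Icc] at ht
    rw [(huderiv t).deriv]
    have h1 : 0 < Real.sinh (a*t) := Real.sinh_pos_iff.mpr (mul_pos ha ht.1)
    have h2 : 0 < Real.sinh (b*t) := Real.sinh_pos_iff.mpr (mul_pos hb ht.1)
    exact mul_pos (Real.exp_pos _)
      (mul_pos (mul_pos (mul_pos (mul_pos two_pos ha) hb) h1) h2)
  have hφpos : ∀ t ∈ Set.Ioo (0:ℝ) 1, 0 < φ t := by
    intro t ht
    have h := husm (Set.left_mem_Icc.mpr one_pos.le)
      ⟨ht.1.le, ht.2.le⟩ ht.1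
    have h0 : Real.exp (r*0) * φ 0 = 0 := by
      simp [hφdef]
    simp only [h0] at h
    nlinarith [Real.exp_pos (r*t)]
  have hvderiv : ∀ t, HasDerivAt
      (fun t => Real.exp (-r*t) * (Real.cosh (a*t) * Real.cosh (b*t) - Real.cosh (r*t)))
      (Real.exp (-r*t) * φ t) t := by
    intro t
    have he : HasDerivAt (fun t => Real.exp (-r*t)) (-r * Real.exp (-r*t)) t := by
      have h := (Real.hasDerivAt_exp (-r*t)).comp t ((hasDerivAt_id t).const_mul (-r))
      simpa [Function.comp_def, mul_comm] using h
    have := he.mul (((hasDerivAt_cosh_mul a t).mul (hasDerivAt_cosh_mul b t)).sub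
      (hasDerivAt_cosh_mul r t))
    refine this.congr_deriv ?_
    symm
    simp only [hφdef, Pi.mul_apply, Pi.sub_apply]
    ring
  have hvsm : StrictMonoOn
      (fun t => Real.exp (-r*t) * (Real.cosh (a*t) * Real.cosh (b*t) - Real.cosh (r*t)))
      (Set.Icc (0:ℝ) 1) := by
    apply strictMonoOn_of_deriv_pos (convex_Icc 0 1)
      (fun t _ => ((hvderiv t).differentiableAt.continuousAt).continuousWithinAt)
    intro t ht
    rw [interior_Icc] at ht
    rw [(hvderiv t).deriv]
    exact mul_pos (Real.exp_pos _) (hφpos t ht)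
  have h := hvsm (Set.left_mem_Icc.mpr one_pos.le) (Set.right_mem_Icc.mpr one_pos.le) one_pos
  simp only [mul_zero, mul_one, Real.cosh_zero] at h
  nlinarith [Real.exp_pos (-r)]


private lemma cosh_le_exp_mul (v u : ℝ) (hv : 0 ≤ v) (hvu : v ≤ u) :
    Real.cosh u ≤ Real.exp (u - v) * Real.cosh v := by
  have h1 : Real.exp (-u) ≤ Real.exp (u - 2*v) := Real.exp_le_exp.mpr (by linarith)
  have e1 : Real.exp (u-v) * Real.exp v = Real.exp u := by
    rw [← Real.exp_add]; congr 1; ring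
  have e2 : Real.exp (u-v) * Real.exp (-v) = Real.exp (u - 2*v) := by
    rw [← Real.exp_add]; congr 1; ring
  rw [Real.cosh_eq, Real.cosh_eq]
  nlinarith [e1, e2, h1]



theorem zero_doping_finite_temp_solvability (ξm lam T : ℝ) (hξ : 0 < ξm) (hlam : 0 < lam)
    (hT : 0 < T) :
    (∃ Δ : ℝ, 0 < Δ ∧
        Real.cosh (Real.sqrt (ξm ^ 2 + Δ ^ 2) / (2 * T)) / Real.cosh (Δ / (2 * T))
          = Real.exp (ξm / (2 * lam * T)))
      ↔ Real.exp (ξm / (2 * lam * T)) < Real.cosh (ξm / (2 * T)) := by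
  constructor
  · rintro ⟨Δ, hΔ, heq⟩
    have hsq : Real.sqrt ((ξm/(2*T))^2 + (Δ/(2*T))^2) = Real.sqrt (ξm^2 + Δ^2) / (2*T) := by
      rw [div_pow, div_pow, ← add_div, Real.sqrt_div (by positivity),
        Real.sqrt_sq (by positivity)]
    have hkey := cosh_sqrt_lt (ξm/(2*T)) (Δ/(2*T)) (by positivity) (by positivity)
    rw [hsq] at hkey
    rw [← heq, div_lt_iff₀ (Real.cosh_pos _)]
    exact hkey
  · intro hE

    set E := Real.exp (ξm / (2 * lam * T)) with hEdef
    set H : ℝ → ℝ := fun Δ =>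
      Real.cosh (Real.sqrt (ξm ^ 2 + Δ ^ 2) / (2 * T)) / Real.cosh (Δ / (2 * T)) with hHdef
    have hcont : Continuous H := by
      apply Continuous.div
      · exact Real.continuous_cosh.comp ((Real.continuous_sqrt.comp (by continuity)).div_const _)
      · exact Real.continuous_cosh.comp (continuous_id.div_const _)
      · exact fun x => (Real.cosh_pos _).ne'
    have hH0 : H 0 = Real.cosh (ξm / (2 * T)) := by
      simp [hHdef, Real.sqrt_sq hξ.le]
    set M := lam * ξm with hMdef
    have hMpos : 0 < M := mul_pos hlam hξ
    set r := Real.sqrt (ξm ^ 2 + M ^ 2) with hrdef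
    have hr2 : r ^ 2 = ξm ^ 2 + M ^ 2 := Real.sq_sqrt (by positivity)
    have hMr : M ≤ r := by
      rw [hrdef]
      nlinarith [Real.sq_sqrt (show (0:ℝ) ≤ ξm ^ 2 + M ^ 2 by positivity),
        Real.sqrt_nonneg (ξm ^ 2 + M ^ 2), hMpos]
    have hHM : H M < E := by
      have hstep1 : Real.cosh (r / (2*T)) ≤
          Real.exp (r / (2*T) - M / (2*T)) * Real.cosh (M / (2*T)) :=
        cosh_le_exp_mul _ _ (by positivity) (by gcongr)
      have hsub : r - M ≤ ξm / (2 * lam) := by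
        rw [le_div_iff₀ (by positivity : (0:ℝ) < 2 * lam)]
        nlinarith [sq_nonneg (r - M), hr2, hMdef, hξ, hlam, mul_pos hlam hξ]
      have hstep2 : Real.exp (r / (2*T) - M / (2*T)) < E := by
        rw [hEdef, Real.exp_lt_exp]
        have : r / (2*T) - M / (2*T) = (r - M) / (2*T) := by ring
        rw [this]
        calc (r - M) / (2*T) ≤ (ξm / (2*lam)) / (2*T) := by gcongr
          _ < ξm / (2 * lam * T) := by
              rw [div_div]
              apply div_lt_div_of_pos_left hξ (by positivity)
              nlinarith [mul_pos hlam hT]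
      have hcosh : (0:ℝ) < Real.cosh (M / (2*T)) := Real.cosh_pos _
      rw [hHdef]
      show Real.cosh (Real.sqrt (ξm ^ 2 + M ^ 2) / (2 * T)) / Real.cosh (M / (2 * T)) < E
      rw [div_lt_iff₀ hcosh, ← hrdef]
      calc Real.cosh (r / (2*T)) ≤ Real.exp (r / (2*T) - M / (2*T)) * Real.cosh (M / (2*T)) := hstep1
        _ < E * Real.cosh (M / (2*T)) := by
            exact mul_lt_mul_of_pos_right hstep2 hcosh
    -- intermediate value theorem
    have hsub : Set.Icc (H M) (H 0) ⊆ H '' Set.Icc 0 M :=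
      intermediate_value_Icc' hMpos.le hcont.continuousOn
    obtain ⟨Δ, hΔmem, hΔeq⟩ := hsub ⟨hHM.le, by rw [hH0]; exact hE.le⟩
    refine ⟨Δ, ?_, hΔeq⟩
    rcases hΔmem.1.lt_or_eq with h | h
    · exact h
    · exfalso
      rw [← h, hH0] at hΔeq
      exact absurd hΔeq.symm hE.ne
end

section
/- For T > 0 and ξ_m > 0, the function h(Δ) = cosh(sqrt(ξ_m² + Δ²)/(2T))/cosh(Δ/(2T)) is strictly decreasing in Δ on [0, ∞) and tends to 1 as Δ → ∞. -/
open Filter Topology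

private lemma sinh_lt_mul_cosh {t : ℝ} (ht : 0 < t) : Real.sinh t < t * Real.cosh t := by
  have hmono : StrictMonoOn (fun t : ℝ => t * Real.cosh t - Real.sinh t) (Set.Ici 0) := by
    apply strictMonoOn_of_deriv_pos (convex_Ici 0)
    · exact ((continuous_id.mul Real.continuous_cosh).sub Real.continuous_sinh).continuousOn
    · intro x hx
      rw [interior_Ici, Set.mem_Ioi] at hx
      have hd : HasDerivAt (fun t : ℝ => t * Real.cosh t - Real.sinh t)
          (1 * Real.cosh x + x * Real.sinh x - Real.cosh x) x :=
        ((hasDerivAt_id x).mul (Real.hasDerivAt_cosh x)).sub (Real.hasDerivAt_sinh x)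
      rw [hd.deriv]
      have := Real.sinh_pos_iff.mpr hx
      nlinarith
  have := hmono (Set.self_mem_Ici) (Set.mem_Ici.mpr ht.le) ht
  simp only [Real.cosh_zero, Real.sinh_zero, mul_zero, zero_mul, sub_zero] at this
  linarith

private lemma mul_sinh_lt_mul_sinh {a b : ℝ} (ha : 0 < a) (hab : a < b) :
    b * Real.sinh a < a * Real.sinh b := by
  have hb : 0 < b := ha.trans hab
  have hmono : StrictMonoOn (fun t : ℝ => Real.sinh t / t) (Set.Ioi 0) := by
    apply strictMonoOn_of_deriv_pos (convex_Ioi 0)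
    · exact Real.continuous_sinh.continuousOn.div continuousOn_id
        (fun x hx => ne_of_gt (Set.mem_Ioi.mp hx))
    · intro x hx
      rw [interior_Ioi, Set.mem_Ioi] at hx
      have hd : HasDerivAt (fun t : ℝ => Real.sinh t / t)
          ((Real.cosh x * x - Real.sinh x * 1) / x ^ 2) x :=
        (Real.hasDerivAt_sinh x).div (hasDerivAt_id x) (ne_of_gt hx)
      rw [hd.deriv]
      have h1 := sinh_lt_mul_cosh hx
      have h2 : (0:ℝ) < x ^ 2 := by positivity
      apply div_pos _ h2
      nlinarith
  have := hmono (Set.mem_Ioi.mpr ha) (Set.mem_Ioi.mpr hb) hab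
  rw [div_lt_div_iff₀ ha hb] at this
  linarith

private lemma key_ineq {x y : ℝ} (hx : 0 < x) (hxy : x < y) :
    x * (Real.sinh y * Real.cosh x) < y * (Real.sinh x * Real.cosh y) := by
  have h1 : Real.sinh y * Real.cosh x = (Real.sinh (y + x) + Real.sinh (y - x)) / 2 := by
    rw [Real.sinh_add, Real.sinh_sub]; ring
  have h2 : Real.sinh x * Real.cosh y = (Real.sinh (y + x) - Real.sinh (y - x)) / 2 := by
    rw [Real.sinh_add, Real.sinh_sub]; ring
  have hB := mul_sinh_lt_mul_sinh (a := y - x) (b := y + x) (by linarith) (by linarith)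
  rw [h1, h2]
  nlinarith

theorem h_strictAnti_and_limit (T ξm : ℝ) (hT : 0 < T) (hξ : 0 < ξm) :
    StrictAntiOn (fun Δ : ℝ =>
        Real.cosh (Real.sqrt (ξm ^ 2 + Δ ^ 2) / (2 * T)) / Real.cosh (Δ / (2 * T)))
      (Set.Ici 0) ∧
    Tendsto (fun Δ : ℝ =>
        Real.cosh (Real.sqrt (ξm ^ 2 + Δ ^ 2) / (2 * T)) / Real.cosh (Δ / (2 * T)))
      atTop (𝓝 1) := by
  have h2T : (0:ℝ) < 2 * T := by linarith
  set f : ℝ → ℝ := fun Δ : ℝ =>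
    Real.cosh (Real.sqrt (ξm ^ 2 + Δ ^ 2) / (2 * T)) / Real.cosh (Δ / (2 * T)) with hf
  -- basic facts about s = sqrt (ξm^2 + Δ^2)
  have hspos : ∀ Δ : ℝ, 0 < Real.sqrt (ξm ^ 2 + Δ ^ 2) := fun Δ =>
    Real.sqrt_pos.mpr (by positivity)
  have hssq : ∀ Δ : ℝ, (Real.sqrt (ξm ^ 2 + Δ ^ 2)) ^ 2 = ξm ^ 2 + Δ ^ 2 := fun Δ =>
    Real.sq_sqrt (by positivity)
  have hsgt : ∀ Δ : ℝ, 0 ≤ Δ → Δ < Real.sqrt (ξm ^ 2 + Δ ^ 2) := by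
    intro Δ hΔ
    nlinarith [hspos Δ, hssq Δ]
  constructor
  · -- strict antitonicity
    apply strictAntiOn_of_deriv_neg (convex_Ici 0)
    · apply Continuous.continuousOn
      apply Continuous.div
      · exact Real.continuous_cosh.comp
          ((Real.continuous_sqrt.comp (by continuity)).div_const _)
      · exact Real.continuous_cosh.comp (continuous_id.div_const _)
      · intro x; exact (Real.cosh_pos _).ne'
    · intro Δ hΔ
      rw [interior_Ici, Set.mem_Ioi] at hΔ
      set s := Real.sqrt (ξm ^ 2 + Δ ^ 2) with hs
      have hsp := hspos Δ
      have hslt := hsgt Δ hΔ.le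
      have h1 : HasDerivAt (fun x : ℝ => ξm ^ 2 + x ^ 2) (2 * Δ) Δ := by
        simpa using (hasDerivAt_pow 2 Δ).const_add (ξm ^ 2)
      have h2 : HasDerivAt (fun x : ℝ => Real.sqrt (ξm ^ 2 + x ^ 2))
          (2 * Δ / (2 * s)) Δ := h1.sqrt (by positivity)
      have h3 : HasDerivAt (fun x : ℝ => Real.sqrt (ξm ^ 2 + x ^ 2) / (2 * T))
          (2 * Δ / (2 * s) / (2 * T)) Δ := h2.div_const _
      have h4 : HasDerivAt (fun x : ℝ => Real.cosh (Real.sqrt (ξm ^ 2 + x ^ 2) / (2 * T)))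
          (Real.sinh (s / (2 * T)) * (2 * Δ / (2 * s) / (2 * T))) Δ := h3.cosh
      have h5 : HasDerivAt (fun x : ℝ => Real.cosh (x / (2 * T)))
          (Real.sinh (Δ / (2 * T)) * (1 / (2 * T))) Δ := ((hasDerivAt_id Δ).div_const _).cosh
      have h6 : HasDerivAt f
          ((Real.sinh (s / (2 * T)) * (2 * Δ / (2 * s) / (2 * T)) * Real.cosh (Δ / (2 * T))
            - Real.cosh (s / (2 * T)) * (Real.sinh (Δ / (2 * T)) * (1 / (2 * T))))
            / Real.cosh (Δ / (2 * T)) ^ 2) Δ :=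
        h4.div h5 (Real.cosh_pos _).ne'
      rw [h6.deriv]
      apply div_neg_of_neg_of_pos _ (by positivity)
      rw [sub_neg]
      have hkey := key_ineq (x := Δ / (2 * T)) (y := s / (2 * T))
        (by positivity) (by gcongr)
      have e1 : Real.sinh (s / (2 * T)) * (2 * Δ / (2 * s) / (2 * T)) * Real.cosh (Δ / (2 * T))
          = (Δ / (2 * T) * (Real.sinh (s / (2 * T)) * Real.cosh (Δ / (2 * T)))) / s := by
        field_simp
      have e2 : Real.cosh (s / (2 * T)) * (Real.sinh (Δ / (2 * T)) * (1 / (2 * T)))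
          = (s / (2 * T) * (Real.sinh (Δ / (2 * T)) * Real.cosh (s / (2 * T)))) / s := by
        field_simp
        exact (mul_inv_cancel₀ hsp.ne').symm
      rw [e1, e2, div_lt_div_iff_of_pos_right hsp]
      exact hkey
  · -- limit
    have hlb : ∀ᶠ Δ : ℝ in atTop, 1 ≤ f Δ := by
      filter_upwards [eventually_ge_atTop (0:ℝ)] with Δ hΔ
      rw [hf]
      dsimp only
      rw [one_le_div (Real.cosh_pos _)]
      apply Real.cosh_le_cosh.mpr
      rw [abs_of_nonneg (by positivity), abs_of_nonneg (by positivity)]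
      gcongr
      exact (hsgt Δ hΔ).le
    have hub : ∀ᶠ Δ : ℝ in atTop,
        f Δ ≤ Real.exp ((Real.sqrt (ξm ^ 2 + Δ ^ 2) - Δ) / (2 * T)) := by
      filter_upwards [eventually_ge_atTop (0:ℝ)] with Δ hΔ
      set s := Real.sqrt (ξm ^ 2 + Δ ^ 2) with hsdef
      have hsp := hspos Δ
      have hslt := hsgt Δ hΔ
      rw [hf]
      dsimp only
      rw [div_le_iff₀ (Real.cosh_pos _)]
      have hab : s / (2 * T) = (s - Δ) / (2 * T) + Δ / (2 * T) := by ring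
      rw [hab, Real.cosh_add]
      have h1 : 0 ≤ Real.sinh ((s - Δ) / (2 * T)) := by
        rw [← Real.sinh_zero]
        apply Real.sinh_le_sinh.mpr
        apply div_nonneg (by linarith) (by linarith)
      have h2 : Real.sinh (Δ / (2 * T)) ≤ Real.cosh (Δ / (2 * T)) :=
        (Real.sinh_lt_cosh _).le
      have h3 := Real.cosh_add_sinh ((s - Δ) / (2 * T))
      nlinarith [Real.cosh_pos (Δ / (2 * T))]
    have hd : Tendsto (fun Δ : ℝ => Real.sqrt (ξm ^ 2 + Δ ^ 2) - Δ) atTop (𝓝 0) := by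
      apply tendsto_of_tendsto_of_tendsto_of_le_of_le' tendsto_const_nhds
        (Tendsto.const_div_atTop tendsto_id (ξm ^ 2))
      · filter_upwards [eventually_ge_atTop (0:ℝ)] with Δ hΔ
        exact sub_nonneg.mpr (hsgt Δ hΔ).le
      · filter_upwards [eventually_ge_atTop (1:ℝ)] with Δ hΔ
        have hΔ0 : (0:ℝ) < Δ := by linarith
        simp only [id_eq]
        rw [le_div_iff₀ hΔ0]
        nlinarith [hssq Δ, hsgt Δ hΔ0.le, hspos Δ]
    have h0 : Tendsto (fun Δ : ℝ => (Real.sqrt (ξm ^ 2 + Δ ^ 2) - Δ) / (2 * T))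
        atTop (𝓝 0) := by
      simpa using hd.div_const (2 * T)
    have hexp : Tendsto (fun Δ : ℝ => Real.exp ((Real.sqrt (ξm ^ 2 + Δ ^ 2) - Δ) / (2 * T)))
        atTop (𝓝 1) := by
      simpa [Function.comp_def] using (Real.continuous_exp.tendsto 0).comp h0
    exact tendsto_of_tendsto_of_tendsto_of_le_of_le' tendsto_const_nhds hexp hlb hub
end

section
/- For 0 < a < b and s > 0, there holds b·(tanh(c) − tanh(b/(2s))) + a·(tanh(a/(2s)) − tanh(c)) < 0 for every c with a/(2s) < c < b/(2s), and consequently 2s·log(cosh(b/(2s))/cosh(a/(2s))) < b·tanh(b/(2s)) − a·tanh(a/(2s)). -/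
open Real

theorem mvt_tanh_inequality (a b s : ℝ) (ha : 0 < a) (hab : a < b) (hs : 0 < s) :
    (∀ c : ℝ, a / (2 * s) < c → c < b / (2 * s) →
      b * (Real.tanh c - Real.tanh (b / (2 * s)))
        + a * (Real.tanh (a / (2 * s)) - Real.tanh c) < 0) ∧
    2 * s * Real.log (Real.cosh (b / (2 * s)) / Real.cosh (a / (2 * s)))
      < b * Real.tanh (b / (2 * s)) - a * Real.tanh (a / (2 * s)) := by
  have hs2 : 0 < 2 * s := by linarith
  have key : ∀ c : ℝ, a / (2 * s) < c → c < b / (2 * s) →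
      b * (Real.tanh c - Real.tanh (b / (2 * s)))
        + a * (Real.tanh (a / (2 * s)) - Real.tanh c) < 0 := by
    intro c h1 h2
    have t1 := tanh_lt_tanh_of_lt h2
    have t2 := tanh_lt_tanh_of_lt h1
    nlinarith
  refine ⟨key, ?_⟩
  -- MVT for f t = 2 s * log (cosh (t / (2 s)))
  set f : ℝ → ℝ := fun t => 2 * s * Real.log (Real.cosh (t / (2 * s)))
  have hderiv : ∀ t : ℝ, HasDerivAt f (Real.tanh (t / (2 * s))) t := by
    intro t
    have h1 : HasDerivAt (fun t : ℝ => t / (2 * s)) (1 / (2 * s)) t := by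
      simpa using (hasDerivAt_id t).div_const (2 * s)
    have h2 : HasDerivAt Real.cosh (Real.sinh (t / (2 * s))) (t / (2 * s)) :=
      Real.hasDerivAt_cosh _
    have h3 := (h2.comp t h1)
    have h4 : HasDerivAt (fun t : ℝ => Real.log (Real.cosh (t / (2 * s))))
        (Real.sinh (t / (2 * s)) * (1 / (2 * s)) / Real.cosh (t / (2 * s))) t :=
      h3.log (ne_of_gt (Real.cosh_pos _))
    have h5 := h4.const_mul (2 * s)
    refine h5.congr_deriv ?_
    rw [Real.tanh_eq_sinh_div_cosh]
    field_simp
  obtain ⟨c, hc, hceq⟩ := exists_hasDerivAt_eq_slope f (fun t => Real.tanh (t / (2 * s))) hab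
    (fun t _ => (hderiv t).continuousAt.continuousWithinAt) (fun t _ => hderiv t)
  have hc1 : a / (2 * s) < c / (2 * s) := by gcongr; exact hc.1
  have hc2 : c / (2 * s) < b / (2 * s) := by gcongr; exact hc.2
  have hk := key _ hc1 hc2
  have hfb : f b - f a = 2 * s * Real.log (Real.cosh (b / (2 * s)) / Real.cosh (a / (2 * s))) := by
    simp only [f]
    rw [Real.log_div (ne_of_gt (Real.cosh_pos _)) (ne_of_gt (Real.cosh_pos _))]
    ring
  have hslope : f b - f a = (b - a) * Real.tanh (c / (2 * s)) := by
    rw [hceq, mul_div_assoc', mul_comm, mul_div_assoc, div_self (sub_ne_zero.2 hab.ne'), mul_one]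
  rw [← hfb, hslope]
  nlinarith
end
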